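/- arXiv:1511.05374 — 10 statements merged into one kernel-verified Lean document; each statement's English description precedes it below -/
import Mathlib

section
/- Let $1 \le p < \infty$, let $A_0, A_1$ be $m \times m$ complex matrices with $A_1 \neq 0$ satisfying $A_1 R(\lambda, A_0) A_1 = \phi(\lambda) A_1$ for $\lambda \notin \sigma(A_0)$, and let $A$ be the bounded operator on $X = \ell^p(\mathbb{Z}; \mathbb{C}^m)$ given by $A(x_k)_{k \in \mathbb{Z}} = (A_0 x_k + A_1 x_{k-1})_{k \in \mathbb{Z}}$. If $\lambda \notin \sigma(A_0)$ and $|\phi(\lambda)| = 1$, then $\lambda$ is not an eigenvalue of $A$. -/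
open scoped ENNReal

/-- for `1 ≤ p < ∞`, points `λ ∉ σ(A₀)` with `|φ(λ)| = 1` are not
eigenvalues of the operator `A(x_k) = (A₀x_k + A₁x_{k-1})` on `ℓ^p(ℤ; ℂ^m)`. -/
theorem stmt_3 (m : ℕ) (p : ℝ≥0∞) (hp1 : 1 ≤ p) (hp2 : p ≠ ∞)
    (A₀ A₁ : Matrix (Fin m) (Fin m) ℂ) (hA₁ : A₁ ≠ 0)
    (φ : ℂ → ℂ)
    (hφ : ∀ lam : ℂ, lam ∉ spectrum ℂ A₀ →
      A₁ * (lam • (1 : Matrix (Fin m) (Fin m) ℂ) - A₀)⁻¹ * A₁ = φ lam • A₁)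
    (lam : ℂ) (hlam : lam ∉ spectrum ℂ A₀) (habs : ‖φ lam‖ = 1) :
    ∀ x : lp (fun _ : ℤ => EuclideanSpace ℂ (Fin m)) p,
      (∀ k : ℤ, Matrix.toEuclideanLin A₀ (x k) + Matrix.toEuclideanLin A₁ (x (k - 1))
          = lam • x k) → x = 0 := by
  intro x h
  set M : Matrix (Fin m) (Fin m) ℂ := lam • (1 : Matrix (Fin m) (Fin m) ℂ) - A₀ with hMdef
  have hMu : IsUnit M := by
    have := spectrum.notMem_iff.mp hlam
    rwa [Algebra.algebraMap_eq_smul_one] at this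
  have hMdet : IsUnit M.det := (Matrix.isUnit_iff_isUnit_det M).mp hMu
  have hinv : M⁻¹ * M = 1 := Matrix.nonsing_inv_mul M hMdet
  set f := Matrix.toEuclideanCLM (n := Fin m) (𝕜 := ℂ) with hf
  have hfl : ∀ (B : Matrix (Fin m) (Fin m) ℂ) v, Matrix.toEuclideanLin B v = f B v := by
    intro B v
    rw [hf, ← Matrix.coe_toEuclideanCLM_eq_toEuclideanLin]
    rfl
  -- key1 : f M (x k) = f A₁ (x (k-1))
  have key1 : ∀ k : ℤ, f M (x k) = f A₁ (x (k - 1)) := by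
    intro k
    have h' := h k
    rw [hfl, hfl] at h'
    have : f M (x k) = lam • x k - f A₀ (x k) := by
      rw [hMdef, map_sub, map_smul, map_one]
      simp
    rw [this, ← h']
    abel
  have key2 : ∀ k : ℤ, f A₁ (x k) = φ lam • f A₁ (x (k - 1)) := by
    intro k
    have h1 : x k = f M⁻¹ (f M (x k)) := by
      have : f M⁻¹ (f M (x k)) = f (M⁻¹ * M) (x k) := by
        rw [map_mul]; rfl
      rw [this, hinv, map_one]; rfl
    have h2 : f (A₁ * M⁻¹ * A₁) (x (k - 1)) = f A₁ (f M⁻¹ (f A₁ (x (k - 1)))) := by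
      simp [map_mul, ContinuousLinearMap.mul_apply]
    calc f A₁ (x k) = f A₁ (f M⁻¹ (f M (x k))) := by rw [← h1]
      _ = f (A₁ * M⁻¹ * A₁) (x (k - 1)) := by rw [h2, key1]
      _ = φ lam • f A₁ (x (k - 1)) := by rw [hφ lam hlam, map_smul]; rfl
  -- norms constant
  have hnorm : ∀ k : ℤ, ‖f A₁ (x k)‖ = ‖f A₁ (x (k - 1))‖ := by
    intro k
    rw [key2 k, norm_smul]
    simp [habs]
  have hconst : ∀ k : ℤ, ‖f A₁ (x k)‖ = ‖f A₁ (x 0)‖ := by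
    intro k
    induction k using Int.induction_on with
    | zero => rfl
    | succ n ih => have := hnorm (n + 1); simpa [ih] using this
    | pred n ih =>
        rw [← hnorm (-n)]; exact ih
  -- tendsto zero
  have hxmem : Memℓp (⇑x) p := x.2
  have hpt : 0 < p.toReal := ENNReal.toReal_pos (by positivity) hp2
  have hsum := hxmem.summable hpt
  have htend := hsum.tendsto_cofinite_zero
  -- show f A₁ (x 0) = 0
  have hzero : ‖f A₁ (x 0)‖ = 0 := by
    by_contra hc
    have hcpos : 0 < ‖f A₁ (x 0)‖ := lt_of_le_of_ne (norm_nonneg _) (Ne.symm hc)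
    set C := ‖f A₁‖ + 1 with hC
    have hCpos : 0 < C := by positivity
    have hb : ∀ k : ℤ, ‖f A₁ (x 0)‖ / C ≤ ‖x k‖ := by
      intro k
      have h0 : ‖f A₁ (x k)‖ ≤ ‖f A₁‖ * ‖x k‖ := (f A₁).le_opNorm (x k)
      have h1 : ‖f A₁ (x k)‖ ≤ C * ‖x k‖ := by
        refine h0.trans ?_
        have : (0:ℝ) ≤ ‖x k‖ := norm_nonneg _
        nlinarith [norm_nonneg (f A₁)]
      rw [hconst k] at h1
      rw [div_le_iff₀ hCpos]
      linarith [h1]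
    set ε := ‖f A₁ (x 0)‖ / C with hε
    have hεpos : 0 < ε := div_pos hcpos hCpos
    have hεt : 0 < ε ^ p.toReal := Real.rpow_pos_of_pos hεpos _
    have hev : ∀ᶠ k in Filter.cofinite, ‖x k‖ ^ p.toReal < ε ^ p.toReal := by
      have := htend.eventually (gt_mem_nhds hεt)
      exact this
    obtain ⟨k, hk⟩ := hev.exists
    have : ε ^ p.toReal ≤ ‖x k‖ ^ p.toReal :=
      Real.rpow_le_rpow (le_of_lt hεpos) (hb k) (le_of_lt hpt)
    linarith
  have hzall : ∀ k : ℤ, f A₁ (x k) = 0 := by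
    intro k
    rw [← norm_eq_zero, hconst k, hzero]
  have hxk : ∀ k : ℤ, x k = 0 := by
    intro k
    have h1 : f M (x k) = 0 := by rw [key1 k, hzall]
    have : x k = f M⁻¹ (f M (x k)) := by
      have : f M⁻¹ (f M (x k)) = f (M⁻¹ * M) (x k) := by rw [map_mul]; rfl
      rw [this, hinv, map_one]; rfl
    rw [this, h1, map_zero]
  apply lp.ext
  funext k
  exact hxk k
end

section
/- Let $A_0, A_1$ be $m \times m$ complex matrices with $A_1 \neq 0$ satisfying $A_1 R(\lambda, A_0) A_1 = \phi(\lambda) A_1$ for $\lambda \notin \sigma(A_0)$, and let $A$ be the bounded operator on $X = \ell^\infty(\mathbb{Z}; \mathbb{C}^m)$ given by $A(x_k) = (A_0 x_k + A_1 x_{k-1})$. If $\lambda \notin \sigma(A_0)$ and $|\phi(\lambda)| = 1$, then the kernel of $\lambda - A$ equals $\{ (\phi(\lambda)^k x_0)_{k \in \mathbb{Z}} : x_0 \in \operatorname{ran}(R(\lambda, A_0) A_1) \}$. -/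
open scoped ENNReal

private lemma toEuc_mul {m : ℕ} (A B : Matrix (Fin m) (Fin m) ℂ)
    (v : EuclideanSpace ℂ (Fin m)) :
    Matrix.toEuclideanLin (A * B) v = Matrix.toEuclideanLin A (Matrix.toEuclideanLin B v) := by
  simp [Matrix.toEuclideanLin_apply, Matrix.mulVec_mulVec]

private lemma toEuc_one {m : ℕ} (v : EuclideanSpace ℂ (Fin m)) :
    Matrix.toEuclideanLin (1 : Matrix (Fin m) (Fin m) ℂ) v = v := by
  simp [Matrix.toEuclideanLin_apply]

/-- on `ℓ^∞(ℤ; ℂ^m)`, for `λ ∉ σ(A₀)` with `|φ(λ)| = 1`, the kernel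
of `λ - A` consists exactly of the sequences `(φ(λ)^k x₀)_k` with
`x₀ ∈ ran(R(λ,A₀) A₁)`. -/
theorem stmt_4 (m : ℕ)
    (A₀ A₁ : Matrix (Fin m) (Fin m) ℂ) (hA₁ : A₁ ≠ 0)
    (φ : ℂ → ℂ)
    (hφ : ∀ lam : ℂ, lam ∉ spectrum ℂ A₀ →
      A₁ * (lam • (1 : Matrix (Fin m) (Fin m) ℂ) - A₀)⁻¹ * A₁ = φ lam • A₁)
    (lam : ℂ) (hlam : lam ∉ spectrum ℂ A₀) (habs : ‖φ lam‖ = 1) :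
    ∀ x : lp (fun _ : ℤ => EuclideanSpace ℂ (Fin m)) ∞,
      (∀ k : ℤ, lam • x k - (Matrix.toEuclideanLin A₀ (x k)
          + Matrix.toEuclideanLin A₁ (x (k - 1))) = 0) ↔
        ∃ x₀ ∈ LinearMap.range
            (Matrix.toEuclideanLin ((lam • (1 : Matrix (Fin m) (Fin m) ℂ) - A₀)⁻¹ * A₁)),
          ∀ k : ℤ, x k = φ lam ^ k • x₀ := by
  intro x
  set M : Matrix (Fin m) (Fin m) ℂ := lam • (1 : Matrix (Fin m) (Fin m) ℂ) - A₀ with hM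
  have hMunit : IsUnit M := by
    have := hlam
    rw [spectrum.notMem_iff] at this
    rwa [Algebra.algebraMap_eq_smul_one] at this
  have hdet : IsUnit M.det := (Matrix.isUnit_iff_isUnit_det M).mp hMunit
  have hRM : M⁻¹ * M = 1 := Matrix.nonsing_inv_mul M hdet
  have hMR : M * M⁻¹ = 1 := Matrix.mul_nonsing_inv M hdet
  have hkey : A₁ * M⁻¹ * A₁ = φ lam • A₁ := hφ lam hlam
  have hφne : φ lam ≠ 0 := by
    intro h; rw [h] at habs; simp at habs
  -- key matrix identity : (M⁻¹ A₁)² = φ • (M⁻¹ A₁)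
  have hsq : (M⁻¹ * A₁) * (M⁻¹ * A₁) = φ lam • (M⁻¹ * A₁) := by
    calc (M⁻¹ * A₁) * (M⁻¹ * A₁) = M⁻¹ * (A₁ * M⁻¹ * A₁) := by
          simp only [Matrix.mul_assoc]
      _ = M⁻¹ * (φ lam • A₁) := by rw [hkey]
      _ = φ lam • (M⁻¹ * A₁) := by rw [Matrix.mul_smul]
  -- M v = lam • v - A₀ v as operators
  have hMapp : ∀ v : EuclideanSpace ℂ (Fin m),
      Matrix.toEuclideanLin M v = lam • v - Matrix.toEuclideanLin A₀ v := by
    intro v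
    rw [hM, map_sub, map_smul]
    simp only [LinearMap.sub_apply, LinearMap.smul_apply]
    rw [toEuc_one]
  constructor
  · intro h
    -- recurrence : x k = M⁻¹ A₁ (x (k-1))
    have hrec : ∀ k : ℤ, x k = Matrix.toEuclideanLin (M⁻¹ * A₁) (x (k - 1)) := by
      intro k
      have h1 : Matrix.toEuclideanLin M (x k) = Matrix.toEuclideanLin A₁ (x (k - 1)) := by
        rw [hMapp]
        have := h k
        rw [sub_eq_zero] at this
        rw [this]; abel
      have : Matrix.toEuclideanLin M⁻¹ (Matrix.toEuclideanLin M (x k))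
          = Matrix.toEuclideanLin M⁻¹ (Matrix.toEuclideanLin A₁ (x (k - 1))) := by rw [h1]
      rw [← toEuc_mul, ← toEuc_mul, hRM, toEuc_one] at this
      exact this
    -- step : x (k+1) = φ • x k
    have hstep : ∀ k : ℤ, x (k + 1) = φ lam • x k := by
      intro k
      have h1 := hrec (k + 1)
      have h2 := hrec k
      simp only [add_sub_cancel_right] at h1
      rw [h1, h2, ← toEuc_mul, hsq, map_smul]
      simp
    refine ⟨x 0, ⟨x (-1), by simpa using (hrec 0).symm⟩, ?_⟩
    -- ∀ k, x k = φ^k • x 0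
    intro k
    induction k using Int.induction_on with
    | zero => simp
    | succ n ih =>
        rw [hstep n, ih, smul_smul, zpow_add_one₀ hφne, mul_comm]
    | pred n ih =>
        have := hstep (-(n : ℤ) - 1)
        rw [sub_add_cancel, ih] at this
        have h2 : x (-(n : ℤ) - 1) = (φ lam)⁻¹ • ((φ lam) • x (-(n : ℤ) - 1)) := by
          rw [smul_smul, inv_mul_cancel₀ hφne, one_smul]
        rw [h2, ← this, smul_smul, ← zpow_neg_one, ← zpow_add₀ hφne]
        ring_nf
  · rintro ⟨x₀, ⟨y, hy⟩, hx⟩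
    intro k
    rw [sub_eq_zero, hx k, hx (k - 1)]
    have hx₀1 : lam • x₀ - Matrix.toEuclideanLin A₀ x₀ = Matrix.toEuclideanLin A₁ y := by
      rw [← hMapp, ← hy, ← toEuc_mul, ← Matrix.mul_assoc, hMR, Matrix.one_mul]
    have hx₀2 : Matrix.toEuclideanLin A₁ x₀ = φ lam • Matrix.toEuclideanLin A₁ y := by
      rw [← hy, ← toEuc_mul, ← Matrix.mul_assoc, hkey]
      simp
    have heq1 : lam • x₀ = Matrix.toEuclideanLin A₀ x₀ + Matrix.toEuclideanLin A₁ y := by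
      rw [← hx₀1]; abel
    have hk2 : (φ lam : ℂ) ^ (k - 1) * φ lam = φ lam ^ k := by
      rw [zpow_sub_one₀ hφne]; field_simp
    rw [map_smul, map_smul, hx₀2, smul_comm lam, heq1, smul_add, smul_smul, hk2]
end

section
/- Let $1 \le p \le \infty$, let $A_0, A_1$ be $m \times m$ complex matrices with $A_1 \neq 0$ satisfying $A_1 R(\lambda, A_0) A_1 = \phi(\lambda) A_1$ for $\lambda \notin \sigma(A_0)$, and let $A$ be the operator on $X = \ell^p(\mathbb{Z}; \mathbb{C}^m)$ given by $A(x_k) = (A_0 x_k + A_1 x_{k-1})$. If $\lambda \notin \sigma(A_0)$ and $|\phi(\lambda)| < 1$, then $\lambda - A$ is invertible in $\mathcal{B}(X)$, with inverse $R(\lambda) x = \big( R_\lambda x_k + R_\lambda A_1 R_\lambda \sum_{\ell=0}^{\infty} \phi(\lambda)^{\ell} x_{k-\ell-1} \big)_{k \in \mathbb{Z}}$, where $R_\lambda = R(\lambda, A_0)$. -/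
open scoped ENNReal

noncomputable section

namespace Stmt5Aux

variable {E : Type*} [NormedAddCommGroup E] [NormedSpace ℂ E]
variable {p : ℝ≥0∞} [hp1 : Fact (1 ≤ p)]

lemma hp_ne_zero : p ≠ 0 := (lt_of_lt_of_le zero_lt_one hp1.out).ne'

lemma memℓp_shift (T : E →L[ℂ] E) (n : ℤ) (x : lp (fun _ : ℤ => E) p) :
    Memℓp (fun k : ℤ => T (x (k - n))) p := by
  by_cases hp : p = ∞
  · subst hp
    apply memℓp_infty
    refine ⟨‖T‖ * ‖x‖, ?_⟩
    rintro - ⟨k, rfl⟩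
    exact (T.le_opNorm _).trans
      (mul_le_mul_of_nonneg_left (lp.norm_apply_le_norm (by norm_num) x _) (norm_nonneg T))
  · have hq : 0 < p.toReal := ENNReal.toReal_pos hp_ne_zero hp
    apply memℓp_gen
    have hx : Summable (fun k : ℤ => ‖x k‖ ^ p.toReal) := (lp.memℓp x).summable hq
    have hx' : Summable (fun k : ℤ => ‖x (k - n)‖ ^ p.toReal) :=
      ((Equiv.subRight n).summable_iff (f := fun k : ℤ => ‖x k‖ ^ p.toReal)).2 hx
    refine Summable.of_nonneg_of_le (fun k => by positivity)
      (fun k => ?_) (hx'.mul_left (‖T‖ ^ p.toReal))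
    calc ‖T (x (k - n))‖ ^ p.toReal
        ≤ (‖T‖ * ‖x (k - n)‖) ^ p.toReal :=
          Real.rpow_le_rpow (norm_nonneg _) (T.le_opNorm _) hq.le
      _ = ‖T‖ ^ p.toReal * ‖x (k - n)‖ ^ p.toReal :=
          Real.mul_rpow (norm_nonneg _) (norm_nonneg _)

lemma shift_norm_le (T : E →L[ℂ] E) (n : ℤ) (x : lp (fun _ : ℤ => E) p) :
    ‖(⟨fun k : ℤ => T (x (k - n)), memℓp_shift T n x⟩ : lp (fun _ : ℤ => E) p)‖ ≤ ‖T‖ * ‖x‖ := by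
  by_cases hp : p = ∞
  · subst hp
    apply lp.norm_le_of_forall_le (by positivity)
    intro k
    exact (T.le_opNorm _).trans
      (mul_le_mul_of_nonneg_left (lp.norm_apply_le_norm (by norm_num) x _) (norm_nonneg T))
  · have hq : 0 < p.toReal := ENNReal.toReal_pos hp_ne_zero hp
    apply lp.norm_le_of_tsum_le hq (by positivity)
    have hx : Summable (fun k : ℤ => ‖x k‖ ^ p.toReal) := (lp.memℓp x).summable hq
    have hx' : Summable (fun k : ℤ => ‖x (k - n)‖ ^ p.toReal) :=
      ((Equiv.subRight n).summable_iff (f := fun k : ℤ => ‖x k‖ ^ p.toReal)).2 hx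
    have hTx : Summable (fun k : ℤ => ‖T (x (k - n))‖ ^ p.toReal) :=
      (memℓp_shift T n x).summable hq
    calc (∑' k : ℤ, ‖T (x (k - n))‖ ^ p.toReal)
        ≤ ∑' k : ℤ, ‖T‖ ^ p.toReal * ‖x (k - n)‖ ^ p.toReal := by
          refine Summable.tsum_le_tsum (fun k => ?_) hTx (hx'.mul_left _)
          calc ‖T (x (k - n))‖ ^ p.toReal
              ≤ (‖T‖ * ‖x (k - n)‖) ^ p.toReal :=
                Real.rpow_le_rpow (norm_nonneg _) (T.le_opNorm _) hq.le
            _ = ‖T‖ ^ p.toReal * ‖x (k - n)‖ ^ p.toReal :=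
                Real.mul_rpow (norm_nonneg _) (norm_nonneg _)
      _ = ‖T‖ ^ p.toReal * ∑' k : ℤ, ‖x (k - n)‖ ^ p.toReal := tsum_mul_left
      _ = ‖T‖ ^ p.toReal * ∑' k : ℤ, ‖x k‖ ^ p.toReal := by
          congr 1
          exact (Equiv.subRight n).tsum_eq (f := fun k : ℤ => ‖x k‖ ^ p.toReal)
      _ = ‖T‖ ^ p.toReal * ‖x‖ ^ p.toReal := by rw [lp.norm_rpow_eq_tsum hq]
      _ = (‖T‖ * ‖x‖) ^ p.toReal := (Real.mul_rpow (norm_nonneg _) (norm_nonneg _)).symm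

/-- The operator `x ↦ (T (x (k - n)))_k` on `ℓ^p(ℤ; E)`. -/
def shiftOp (T : E →L[ℂ] E) (n : ℤ) :
    lp (fun _ : ℤ => E) p →L[ℂ] lp (fun _ : ℤ => E) p :=
  LinearMap.mkContinuous
    { toFun := fun x => ⟨fun k : ℤ => T (x (k - n)), memℓp_shift T n x⟩
      map_add' := fun x y => by
        apply lp.ext; funext k
        simp [lp.coeFn_add]; rfl
      map_smul' := fun c x => by
        apply lp.ext; funext k
        simp [lp.coeFn_smul] }
    ‖T‖ (fun x => shift_norm_le T n x)

@[simp] lemma shiftOp_apply (T : E →L[ℂ] E) (n : ℤ) (x : lp (fun _ : ℤ => E) p) (k : ℤ) :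
    shiftOp T n x k = T (x (k - n)) := rfl

lemma shiftOp_norm_le (T : E →L[ℂ] E) (n : ℤ) :
    ‖(shiftOp T n : lp (fun _ : ℤ => E) p →L[ℂ] lp (fun _ : ℤ => E) p)‖ ≤ ‖T‖ :=
  LinearMap.mkContinuous_norm_le _ (norm_nonneg T) _

/-- Evaluation at a coordinate as a continuous linear map. -/
def evalCLM (k : ℤ) : lp (fun _ : ℤ => E) p →L[ℂ] E :=
  LinearMap.mkContinuous
    { toFun := fun x => x k
      map_add' := fun x y => by simp [lp.coeFn_add]
      map_smul' := fun c x => by simp [lp.coeFn_smul] }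
    1 (fun x => by rw [one_mul]; exact lp.norm_apply_le_norm hp_ne_zero x k)

@[simp] lemma evalCLM_apply (k : ℤ) (x : lp (fun _ : ℤ => E) p) :
    (evalCLM k) x = x k := rfl

end Stmt5Aux


end

open Stmt5Aux in
set_option maxHeartbeats 1000000 in
/-- if `λ ∉ σ(A₀)` and `|φ(λ)| < 1`, then `λ - A` is invertible in
`𝓑(ℓ^p(ℤ;ℂ^m))`, with inverse given by
`(R(λ)x)_k = R_λ x_k + R_λ A₁ R_λ ∑_{ℓ≥0} φ(λ)^ℓ x_{k-ℓ-1}`. -/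
theorem stmt_5 (m : ℕ) (p : ℝ≥0∞) [hp1 : Fact (1 ≤ p)]
    (A₀ A₁ : Matrix (Fin m) (Fin m) ℂ) (hA₁ : A₁ ≠ 0)
    (φ : ℂ → ℂ)
    (hφ : ∀ lam : ℂ, lam ∉ spectrum ℂ A₀ →
      A₁ * (lam • (1 : Matrix (Fin m) (Fin m) ℂ) - A₀)⁻¹ * A₁ = φ lam • A₁)
    (lam : ℂ) (hlam : lam ∉ spectrum ℂ A₀) (habs : ‖φ lam‖ < 1) :
    ∃ R : lp (fun _ : ℤ => EuclideanSpace ℂ (Fin m)) p →L[ℂ]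
        lp (fun _ : ℤ => EuclideanSpace ℂ (Fin m)) p,
      -- the explicit formula for the inverse
      (∀ x : lp (fun _ : ℤ => EuclideanSpace ℂ (Fin m)) p, ∀ k : ℤ,
        R x k = Matrix.toEuclideanLin (lam • (1 : Matrix (Fin m) (Fin m) ℂ) - A₀)⁻¹ (x k)
          + Matrix.toEuclideanLin
              ((lam • (1 : Matrix (Fin m) (Fin m) ℂ) - A₀)⁻¹ * A₁ *
                (lam • (1 : Matrix (Fin m) (Fin m) ℂ) - A₀)⁻¹)
              (∑' ℓ : ℕ, φ lam ^ ℓ • x (k - ℓ - 1))) ∧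
      -- (λ - A) ∘ R = I
      (∀ x : lp (fun _ : ℤ => EuclideanSpace ℂ (Fin m)) p, ∀ k : ℤ,
        lam • R x k - (Matrix.toEuclideanLin A₀ (R x k)
          + Matrix.toEuclideanLin A₁ (R x (k - 1))) = x k) ∧
      -- R ∘ (λ - A) = I
      (∀ x y : lp (fun _ : ℤ => EuclideanSpace ℂ (Fin m)) p,
        (∀ k : ℤ, y k = lam • x k - (Matrix.toEuclideanLin A₀ (x k)
          + Matrix.toEuclideanLin A₁ (x (k - 1)))) → R y = x) := by
  classical
  set Il : Matrix (Fin m) (Fin m) ℂ := lam • (1 : Matrix (Fin m) (Fin m) ℂ) - A₀ with hIl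
  have hu : IsUnit Il := by
    rw [spectrum.notMem_iff] at hlam
    simpa [Algebra.algebraMap_eq_smul_one] using hlam
  have hdet : IsUnit Il.det := Il.isUnit_iff_isUnit_det.mp hu
  set Rm : Matrix (Fin m) (Fin m) ℂ := Il⁻¹ with hRm
  have h1 : Il * Rm = 1 := Matrix.mul_nonsing_inv _ hdet
  have h2 : Rm * Il = 1 := Matrix.nonsing_inv_mul _ hdet
  set φ0 : ℂ := φ lam with hφ0def
  have hφA : A₁ * Rm * A₁ = φ0 • A₁ := hφ lam hlam
  set M2 : Matrix (Fin m) (Fin m) ℂ := Rm * A₁ * Rm with hM2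
  set C := Matrix.toEuclideanCLM (n := Fin m) (𝕜 := ℂ) with hCdef
  have hTE : ∀ (M : Matrix (Fin m) (Fin m) ℂ) (v : EuclideanSpace ℂ (Fin m)),
      Matrix.toEuclideanLin M v = C M v := fun _ _ => rfl
  have habs' : ‖φ0‖ < 1 := by simpa using habs
  have hCm : ∀ (M N : Matrix (Fin m) (Fin m) ℂ) (v : EuclideanSpace ℂ (Fin m)),
      C (M * N) v = C M (C N v) := fun M N v => by rw [map_mul]; rfl
  have hCsmul : ∀ (N : Matrix (Fin m) (Fin m) ℂ) (v : EuclideanSpace ℂ (Fin m)),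
      C (φ0 • N) v = φ0 • C N v := fun N v => by
    rw [map_smul, ContinuousLinearMap.smul_apply]
  have hC1 : ∀ v : EuclideanSpace ℂ (Fin m), C 1 v = v := fun v => by
    rw [map_one, ContinuousLinearMap.one_apply]
  -- summability of the vector-valued geometric series
  have hsumx : ∀ (x : lp (fun _ : ℤ => EuclideanSpace ℂ (Fin m)) p) (k : ℤ), Summable (fun ℓ : ℕ => φ0 ^ ℓ • x (k - ℓ - 1)) := by
    intro x k
    apply Summable.of_norm
    refine Summable.of_nonneg_of_le (fun ℓ => norm_nonneg _) (fun ℓ => ?_)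
      ((summable_geometric_of_lt_one (norm_nonneg φ0) habs').mul_right ‖x‖)
    rw [norm_smul, norm_pow]
    exact mul_le_mul_of_nonneg_left
      (lp.norm_apply_le_norm (Stmt5Aux.hp_ne_zero (p := p)) x _) (by positivity)
  have hsum : ∀ (M : Matrix (Fin m) (Fin m) ℂ) (x : lp (fun _ : ℤ => EuclideanSpace ℂ (Fin m)) p) (k : ℤ),
      Summable (fun ℓ : ℕ => φ0 ^ ℓ • C M (x (k - ℓ - 1))) := by
    intro M x k
    apply Summable.of_norm
    refine Summable.of_nonneg_of_le (fun ℓ => norm_nonneg _) (fun ℓ => ?_)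
      ((summable_geometric_of_lt_one (norm_nonneg φ0) habs').mul_right (‖C M‖ * ‖x‖))
    rw [norm_smul, norm_pow]
    refine mul_le_mul_of_nonneg_left ?_ (by positivity)
    exact ((C M).le_opNorm _).trans (mul_le_mul_of_nonneg_left
      (lp.norm_apply_le_norm (Stmt5Aux.hp_ne_zero (p := p)) x _) (norm_nonneg _))
  -- pulling a continuous linear map through the series
  have hpull : ∀ (M : Matrix (Fin m) (Fin m) ℂ) (x : lp (fun _ : ℤ => EuclideanSpace ℂ (Fin m)) p) (k : ℤ),
      C M (∑' ℓ : ℕ, φ0 ^ ℓ • x (k - ℓ - 1))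
        = ∑' ℓ : ℕ, φ0 ^ ℓ • C M (x (k - ℓ - 1)) := by
    intro M x k
    rw [(C M).map_tsum (hsumx x k)]
    exact tsum_congr fun ℓ => (C M).map_smul _ _
  -- the operator series
  have hSop : Summable (fun ℓ : ℕ => φ0 ^ ℓ • (shiftOp (p := p) (C M2) ((ℓ : ℤ) + 1) : lp (fun _ : ℤ => EuclideanSpace ℂ (Fin m)) p →L[ℂ] lp (fun _ : ℤ => EuclideanSpace ℂ (Fin m)) p)) := by
    apply Summable.of_norm
    refine Summable.of_nonneg_of_le (fun ℓ => norm_nonneg _) (fun ℓ => ?_)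
      ((summable_geometric_of_lt_one (norm_nonneg φ0) habs').mul_right ‖C M2‖)
    refine (norm_smul_le (φ0 ^ ℓ) (shiftOp (p := p) (C M2) ((ℓ : ℤ) + 1))).trans ?_
    rw [norm_pow]
    exact mul_le_mul_of_nonneg_left (shiftOp_norm_le _ _) (by positivity)
  set Rop : lp (fun _ : ℤ => EuclideanSpace ℂ (Fin m)) p →L[ℂ] lp (fun _ : ℤ => EuclideanSpace ℂ (Fin m)) p :=
    shiftOp (p := p) (C Rm) 0 + ∑' ℓ : ℕ, φ0 ^ ℓ • shiftOp (p := p) (C M2) ((ℓ : ℤ) + 1) with hRopdef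
  -- the pointwise formula
  have hRapp : ∀ (x : lp (fun _ : ℤ => EuclideanSpace ℂ (Fin m)) p) (k : ℤ),
      Rop x k = C Rm (x k) + ∑' ℓ : ℕ, φ0 ^ ℓ • C M2 (x (k - ℓ - 1)) := by
    intro x k
    have hSx : Summable (fun ℓ : ℕ => (φ0 ^ ℓ • shiftOp (p := p) (C M2) ((ℓ : ℤ) + 1) : lp (fun _ : ℤ => EuclideanSpace ℂ (Fin m)) p →L[ℂ] lp (fun _ : ℤ => EuclideanSpace ℂ (Fin m)) p) x) :=
      hSop.map (ContinuousLinearMap.apply ℂ (lp (fun _ : ℤ => EuclideanSpace ℂ (Fin m)) p) x).toLinearMap.toAddMonoidHom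
        (ContinuousLinearMap.apply ℂ (lp (fun _ : ℤ => EuclideanSpace ℂ (Fin m)) p) x).continuous
    have hap : Rop x = shiftOp (p := p) (C Rm) 0 x
        + ∑' ℓ : ℕ, (φ0 ^ ℓ • shiftOp (p := p) (C M2) ((ℓ : ℤ) + 1) : lp (fun _ : ℤ => EuclideanSpace ℂ (Fin m)) p →L[ℂ] lp (fun _ : ℤ => EuclideanSpace ℂ (Fin m)) p) x := by
      rw [hRopdef, ContinuousLinearMap.add_apply]
      congr 1
      exact (ContinuousLinearMap.apply ℂ (lp (fun _ : ℤ => EuclideanSpace ℂ (Fin m)) p) x).map_tsum hSop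
    have hcoord : (∑' ℓ : ℕ, (φ0 ^ ℓ • shiftOp (p := p) (C M2) ((ℓ : ℤ) + 1) : lp (fun _ : ℤ => EuclideanSpace ℂ (Fin m)) p →L[ℂ] lp (fun _ : ℤ => EuclideanSpace ℂ (Fin m)) p) x) k
        = ∑' ℓ : ℕ, ((φ0 ^ ℓ • shiftOp (p := p) (C M2) ((ℓ : ℤ) + 1) : lp (fun _ : ℤ => EuclideanSpace ℂ (Fin m)) p →L[ℂ] lp (fun _ : ℤ => EuclideanSpace ℂ (Fin m)) p) x) k :=
      (Stmt5Aux.evalCLM k).map_tsum hSx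
    have : Rop x k = shiftOp (p := p) (C Rm) 0 x k
        + ∑' ℓ : ℕ, ((φ0 ^ ℓ • shiftOp (p := p) (C M2) ((ℓ : ℤ) + 1) : lp (fun _ : ℤ => EuclideanSpace ℂ (Fin m)) p →L[ℂ] lp (fun _ : ℤ => EuclideanSpace ℂ (Fin m)) p) x) k := by
      rw [hap, lp.coeFn_add, Pi.add_apply, hcoord]
    rw [this, shiftOp_apply, sub_zero]
    congr 1
    refine tsum_congr fun ℓ => ?_
    rw [ContinuousLinearMap.smul_apply, lp.coeFn_smul, Pi.smul_apply, shiftOp_apply]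
    congr 2
    push_cast
    ring
  -- the statement formula
  have hformula : ∀ (x : lp (fun _ : ℤ => EuclideanSpace ℂ (Fin m)) p) (k : ℤ),
      Rop x k = C Rm (x k) + C M2 (∑' ℓ : ℕ, φ0 ^ ℓ • x (k - ℓ - 1)) := by
    intro x k
    rw [hRapp, hpull]
  -- recurrence for the partial series
  have hrec : ∀ (x : lp (fun _ : ℤ => EuclideanSpace ℂ (Fin m)) p) (k : ℤ),
      (∑' ℓ : ℕ, φ0 ^ ℓ • x (k - ℓ - 1))
        = x (k - 1) + φ0 • ∑' ℓ : ℕ, φ0 ^ ℓ • x ((k - 1) - ℓ - 1) := by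
    intro x k
    rw [Summable.tsum_eq_zero_add (hsumx x k)]
    congr 1
    · simp
    · rw [← Summable.tsum_const_smul φ0 (hsumx x (k - 1))]
      refine tsum_congr fun ℓ => ?_
      rw [smul_smul, ← pow_succ']
      congr 2
      push_cast
      ring
  refine ⟨Rop, fun x k => hformula x k, ?_, ?_⟩
  · -- (λ - A) ∘ R = I
    intro x k
    simp only [hTE]
    rw [hformula x k, hformula x (k - 1)]
    set Sk := ∑' ℓ : ℕ, φ0 ^ ℓ • x (k - ℓ - 1) with hSk
    set Sk1 := ∑' ℓ : ℕ, φ0 ^ ℓ • x ((k - 1) - ℓ - 1) with hSk1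
    have e1 : Il * M2 = A₁ * Rm := by
      rw [hM2, ← mul_assoc, ← mul_assoc, h1, one_mul]
    have e2 : A₁ * M2 = φ0 • (A₁ * Rm) := by
      rw [hM2, ← mul_assoc, ← mul_assoc, hφA, smul_mul_assoc]
    have hA : C Il (C Rm (x k) + C M2 Sk) = x k + C (A₁ * Rm) Sk := by
      rw [map_add, ← hCm, ← hCm, h1, hC1, e1]
    have hB : C A₁ (C Rm (x (k - 1)) + C M2 Sk1)
        = C (A₁ * Rm) (x (k - 1)) + φ0 • C (A₁ * Rm) Sk1 := by
      rw [map_add, ← hCm, ← hCm, e2, hCsmul]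
    have hD : C (A₁ * Rm) Sk = C (A₁ * Rm) (x (k - 1)) + φ0 • C (A₁ * Rm) Sk1 := by
      rw [hSk, hrec x k, map_add, map_smul, hSk1]
    have hlamu : ∀ v : EuclideanSpace ℂ (Fin m), lam • v - C A₀ v = C Il v := by
      intro v
      rw [hIl, map_sub, map_smul, map_one, ContinuousLinearMap.sub_apply,
        ContinuousLinearMap.smul_apply, ContinuousLinearMap.one_apply]
    calc lam • (C Rm (x k) + C M2 Sk)
          - (C A₀ (C Rm (x k) + C M2 Sk) + C A₁ (C Rm (x (k - 1)) + C M2 Sk1))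
        = (lam • (C Rm (x k) + C M2 Sk) - C A₀ (C Rm (x k) + C M2 Sk))
            - C A₁ (C Rm (x (k - 1)) + C M2 Sk1) := by abel
      _ = C Il (C Rm (x k) + C M2 Sk) - C A₁ (C Rm (x (k - 1)) + C M2 Sk1) := by
          rw [hlamu]
      _ = (x k + C (A₁ * Rm) Sk)
            - (C (A₁ * Rm) (x (k - 1)) + φ0 • C (A₁ * Rm) Sk1) := by rw [hA, hB]
      _ = x k := by rw [hD]; abel
  · -- R ∘ (λ - A) = I
    intro x y hy
    simp only [hTE] at hy
    have hy' : ∀ k : ℤ, y k = C Il (x k) - C A₁ (x (k - 1)) := by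
      intro k
      rw [hy k, hIl, map_sub, map_smul, map_one, ContinuousLinearMap.sub_apply,
        ContinuousLinearMap.smul_apply, ContinuousLinearMap.one_apply]
      abel
    apply lp.ext
    funext k
    have e4 : M2 * Il = Rm * A₁ := by
      rw [hM2, mul_assoc, h2, mul_one]
    have e5 : M2 * A₁ = φ0 • (Rm * A₁) := by
      rw [hM2, mul_assoc, mul_assoc, ← mul_assoc A₁ Rm A₁, hφA, mul_smul_comm]
    have hCy : ∀ j : ℤ, C M2 (y j) = C (Rm * A₁) (x j) - φ0 • C (Rm * A₁) (x (j - 1)) := by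
      intro j
      rw [hy' j, map_sub, ← hCm, ← hCm, e4, e5, hCsmul]
    have hRy1 : C Rm (y k) = x k - C (Rm * A₁) (x (k - 1)) := by
      rw [hy' k, map_sub, ← hCm, ← hCm, h2, hC1]
    set a : ℕ → EuclideanSpace ℂ (Fin m) :=
      fun ℓ => φ0 ^ ℓ • C (Rm * A₁) (x (k - ℓ - 1)) with ha_def
    have ha : Summable a := hsum (Rm * A₁) x k
    have ha' : Summable (fun ℓ : ℕ => a (ℓ + 1)) := (summable_nat_add_iff 1).2 ha
    have hterm : ∀ ℓ : ℕ, φ0 ^ ℓ • C M2 (y (k - ℓ - 1)) = a ℓ - a (ℓ + 1) := by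
      intro ℓ
      rw [hCy, smul_sub, ha_def]
      congr 1
      rw [smul_smul, ← pow_succ]
      congr 2
      push_cast
      ring
    have htel : C M2 (∑' ℓ : ℕ, φ0 ^ ℓ • y (k - ℓ - 1)) = a 0 := by
      rw [hpull M2 y k]
      rw [tsum_congr hterm, Summable.tsum_sub ha ha']
      rw [Summable.tsum_eq_zero_add ha]
      abel
    have ha0 : a 0 = C (Rm * A₁) (x (k - 1)) := by
      rw [ha_def]
      simp
    rw [hformula y k, hRy1, htel, ha0]
    abel
end

section
/- Let $1 < p < \infty$, let $A_0, A_1$ be $m \times m$ complex matrices with $A_1 \neq 0$ satisfying $A_1 R(\lambda, A_0) A_1 = \phi(\lambda) A_1$ for $\lambda \notin \sigma(A_0)$, and let $A$ be the operator on $X = \ell^p(\mathbb{Z}; \mathbb{C}^m)$ given by $A(x_k) = (A_0 x_k + A_1 x_{k-1})$. If $\lambda \notin \sigma(A_0)$ and $|\phi(\lambda)| = 1$, then the range of $\lambda - A$ is dense in $X$. -/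
open scoped ENNReal

private lemma aux_sum_single_apply {E : Type*} [NormedAddCommGroup E] (p : ℝ≥0∞)
    (n : ℤ) (d : ℕ → E) (M : ℕ) (k : ℤ) :
    (↑(∑ j ∈ Finset.range M, lp.single (E := fun _ : ℤ => E) p (n + j) (d j)) : ℤ → E) k =
      if n ≤ k ∧ k < n + M then d (k - n).toNat else 0 := by
  induction M with
  | zero =>
      rw [Finset.sum_range_zero, lp.coeFn_zero, if_neg (by omega)]
      rfl
  | succ M ih =>
      rw [Finset.sum_range_succ, lp.coeFn_add, Pi.add_apply, ih]
      by_cases hk : k = n + M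
      · subst hk
        rw [if_neg (by omega), lp.single_apply_self, zero_add,
          if_pos (by constructor <;> omega)]
        congr 1
        omega
      · rw [lp.single_apply_ne p _ _ hk, add_zero]
        by_cases h2 : n ≤ k ∧ k < n + M
        · rw [if_pos h2, if_pos ⟨h2.1, by omega⟩]
        · rw [if_neg h2, if_neg (by push_cast at h2 ⊢; omega)]

private lemma aux_norm_sum_single {E : Type*} [NormedAddCommGroup E] {p : ℝ≥0∞}
    (hp : 0 < p.toReal) (n : ℤ) (e : ℕ → E) (M : ℕ) :
    ‖∑ j ∈ Finset.range M, lp.single (E := fun _ : ℤ => E) p (n + j) (e j)‖ ^ p.toReal =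
      ∑ j ∈ Finset.range M, ‖e j‖ ^ p.toReal := by
  classical
  set g : ℤ → E := fun i => e (i - n).toNat with hg
  have hinj : ∀ a ∈ Finset.range M, ∀ b ∈ Finset.range M,
      n + (a : ℤ) = n + (b : ℤ) → a = b := by intro a _ b _ h; omega
  have h1 : ∑ j ∈ Finset.range M, lp.single (E := fun _ : ℤ => E) p (n + j) (e j) =
      ∑ i ∈ (Finset.range M).image (fun j : ℕ => n + (j : ℤ)), lp.single p i (g i) := by
    rw [Finset.sum_image hinj]
    refine Finset.sum_congr rfl fun j _ => ?_
    congr 1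
    simp [hg]
  rw [h1, lp.norm_sum_single hp g, Finset.sum_image hinj]
  refine Finset.sum_congr rfl fun j _ => ?_
  congr 2
  simp [hg]

set_option maxHeartbeats 1000000 in
/-- for `1 < p < ∞`, `λ ∉ σ(A₀)` with `|φ(λ)| = 1`, the range of
`λ - A` is dense in `ℓ^p(ℤ; ℂ^m)`. -/
theorem stmt_6 (m : ℕ) (p : ℝ≥0∞) [Fact (1 ≤ p)] (hp1 : 1 < p) (hp2 : p ≠ ∞)
    (A₀ A₁ : Matrix (Fin m) (Fin m) ℂ) (hA₁ : A₁ ≠ 0)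
    (φ : ℂ → ℂ)
    (hφ : ∀ lam : ℂ, lam ∉ spectrum ℂ A₀ →
      A₁ * (lam • (1 : Matrix (Fin m) (Fin m) ℂ) - A₀)⁻¹ * A₁ = φ lam • A₁)
    (lam : ℂ) (hlam : lam ∉ spectrum ℂ A₀) (habs : ‖φ lam‖ = 1) :
    Dense {y : lp (fun _ : ℤ => EuclideanSpace ℂ (Fin m)) p |
      ∃ x : lp (fun _ : ℤ => EuclideanSpace ℂ (Fin m)) p,
        ∀ k : ℤ, y k = lam • x k - (Matrix.toEuclideanLin A₀ (x k)
          + Matrix.toEuclideanLin A₁ (x (k - 1)))} := by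
  classical
  have hpr : 1 < p.toReal := by
    have := ENNReal.toReal_strict_mono hp2 hp1
    simpa using this
  have hpr0 : (0:ℝ) < p.toReal := lt_trans one_pos hpr
  -- matrix setup
  set Mt : Matrix (Fin m) (Fin m) ℂ := lam • (1 : Matrix (Fin m) (Fin m) ℂ) - A₀ with hMt
  have hMunit : IsUnit Mt := by
    have h := spectrum.notMem_iff.mp hlam
    rwa [Algebra.algebraMap_eq_smul_one] at h
  have hMinv : Mt * Mt⁻¹ = 1 :=
    Matrix.mul_nonsing_inv _ ((Matrix.isUnit_iff_isUnit_det Mt).mp hMunit)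
  set ψ : ℂ := φ lam with hψ
  have hψabs : ‖ψ‖ = 1 := by exact habs
  set T₀ := Matrix.toEuclideanLin A₀ with hT₀
  set T₁ := Matrix.toEuclideanLin A₁ with hT₁
  set Rl := Matrix.toEuclideanLin Mt⁻¹ with hRl
  have hmul : ∀ (P Q : Matrix (Fin m) (Fin m) ℂ) (v : EuclideanSpace ℂ (Fin m)),
      Matrix.toEuclideanLin (P * Q) v = Matrix.toEuclideanLin P (Matrix.toEuclideanLin Q v) := by
    intro P Q v
    simp [Matrix.toEuclideanLin_apply, Matrix.mulVec_mulVec]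
  have hone : ∀ v : EuclideanSpace ℂ (Fin m),
      Matrix.toEuclideanLin (1 : Matrix (Fin m) (Fin m) ℂ) v = v := by
    intro v
    simp [Matrix.toEuclideanLin_apply, Matrix.one_mulVec]
  have H1 : ∀ v : EuclideanSpace ℂ (Fin m), lam • Rl v - T₀ (Rl v) = v := by
    intro v
    have h : Matrix.toEuclideanLin (Mt * Mt⁻¹) v = v := by rw [hMinv]; exact hone v
    rw [hmul] at h
    rw [hMt, map_sub, map_smul, LinearMap.sub_apply, LinearMap.smul_apply, hone] at h
    exact h
  have H2 : ∀ v : EuclideanSpace ℂ (Fin m), T₁ (Rl (T₁ v)) = ψ • T₁ v := by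
    intro v
    have key := hφ lam hlam
    rw [← hMt, ← hψ] at key
    have h := congrArg (fun P => Matrix.toEuclideanLin P v) key
    rw [hmul, hmul, map_smul, LinearMap.smul_apply] at h
    rw [← hT₁, ← hRl] at h
    exact h
  set S := {y : lp (fun _ : ℤ => EuclideanSpace ℂ (Fin m)) p |
      ∃ x : lp (fun _ : ℤ => EuclideanSpace ℂ (Fin m)) p,
        ∀ k : ℤ, y k = lam • x k - (T₀ (x k) + T₁ (x (k - 1)))} with hSdef
  -- S is a submodule
  let Sm : Submodule ℂ (lp (fun _ : ℤ => EuclideanSpace ℂ (Fin m)) p) :=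
    { carrier := S
      add_mem' := by
        rintro a b ⟨x, hx⟩ ⟨x', hx'⟩
        refine ⟨x + x', fun k => ?_⟩
        rw [lp.coeFn_add, lp.coeFn_add, Pi.add_apply, Pi.add_apply, Pi.add_apply,
          hx k, hx' k, map_add, map_add, smul_add]
        abel
      zero_mem' := by
        refine ⟨0, fun k => ?_⟩
        rw [lp.coeFn_zero, Pi.zero_apply, Pi.zero_apply]
        simp
      smul_mem' := by
        rintro c a ⟨x, hx⟩
        refine ⟨c • x, fun k => ?_⟩
        rw [lp.coeFn_smul, lp.coeFn_smul, Pi.smul_apply, Pi.smul_apply, Pi.smul_apply,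
          hx k, map_smul, map_smul, smul_sub, smul_add, smul_comm c lam] }
  have hsingle : ∀ (n : ℤ) (v : EuclideanSpace ℂ (Fin m)), lp.single p n v ∈ closure S := by
    intro n v
    rw [Metric.mem_closure_iff]
    intro ε hε
    set w := T₁ (Rl v) with hw
    set u := Rl w with hu
    have hTu : T₁ u = ψ • w := by rw [hu, hw]; exact H2 (Rl v)
    have hH1w : lam • u - T₀ u = w := by rw [hu]; exact H1 w
    set pr := p.toReal with hprdef
    -- choose N large
    obtain ⟨N, hNgt⟩ := exists_nat_gt
      (max 1 ((‖w‖ ^ pr / ε ^ pr) ^ (1 / (pr - 1))))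
    have hN1R : (1:ℝ) < N := lt_of_le_of_lt (le_max_left _ _) hNgt
    have hN1 : 1 ≤ N := by exact_mod_cast hN1R.le
    have hNpos : (0:ℝ) < N := lt_trans one_pos hN1R
    have hNC : (N:ℂ) ≠ 0 := Nat.cast_ne_zero.mpr (by omega)
    have hεpr : (0:ℝ) < ε ^ pr := Real.rpow_pos_of_pos hε _
    have hwpr : (0:ℝ) ≤ ‖w‖ ^ pr := Real.rpow_nonneg (norm_nonneg _) _
    have hC0 : (0:ℝ) ≤ ‖w‖ ^ pr / ε ^ pr := div_nonneg hwpr hεpr.le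
    have hCN : ‖w‖ ^ pr / ε ^ pr < (N:ℝ) ^ (pr - 1) := by
      have h1 : (‖w‖ ^ pr / ε ^ pr) ^ (1 / (pr - 1)) < N :=
        lt_of_le_of_lt (le_max_right _ _) hNgt
      have h2 : ((‖w‖ ^ pr / ε ^ pr) ^ (1 / (pr - 1))) ^ (pr - 1) < (N:ℝ) ^ (pr - 1) :=
        Real.rpow_lt_rpow (Real.rpow_nonneg hC0 _) h1 (by rw [hprdef]; linarith)
      have h3 : ((‖w‖ ^ pr / ε ^ pr) ^ (1 / (pr - 1))) ^ (pr - 1) = ‖w‖ ^ pr / ε ^ pr := by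
        rw [← Real.rpow_mul hC0, one_div_mul_cancel (by rw [hprdef]; linarith : pr - 1 ≠ 0),
          Real.rpow_one]
      linarith
    have hNpr1 : (0:ℝ) < (N:ℝ) ^ (pr - 1) := Real.rpow_pos_of_pos hNpos _
    have hkey : (N:ℝ) * ((1 / N) * ‖w‖) ^ pr < ε ^ pr := by
      have hsplit : (N:ℝ) ^ pr = (N:ℝ) ^ (pr - 1) * N := by
        calc (N:ℝ) ^ pr = (N:ℝ) ^ ((pr - 1) + 1) := by congr 1; ring
          _ = (N:ℝ) ^ (pr - 1) * (N:ℝ) ^ (1:ℝ) := Real.rpow_add hNpos _ _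
          _ = (N:ℝ) ^ (pr - 1) * N := by rw [Real.rpow_one]
      have hdiv : ((1 / (N:ℝ)) * ‖w‖) ^ pr = ‖w‖ ^ pr / (N:ℝ) ^ pr := by
        rw [one_div_mul_eq_div, Real.div_rpow (norm_nonneg _) hNpos.le]
      rw [hdiv, hsplit]
      have heq : (N:ℝ) * (‖w‖ ^ pr / ((N:ℝ) ^ (pr - 1) * N)) = ‖w‖ ^ pr / (N:ℝ) ^ (pr - 1) := by
        field_simp
      rw [heq, div_lt_iff₀ hNpr1]
      have := (div_lt_iff₀ hεpr).mp hCN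
      linarith [this]
    -- the approximate solution
    set d : ℕ → EuclideanSpace ℂ (Fin m) := fun j =>
      if j = 0 then Rl v else ((((N:ℂ) - (j:ℂ)) / (N:ℂ)) * ψ ^ (j - 1)) • u with hd
    set e : ℕ → EuclideanSpace ℂ (Fin m) := fun j => ((-(1 / (N:ℂ))) * ψ ^ j) • w with he
    set X := ∑ j ∈ Finset.range (N + 1),
      lp.single (E := fun _ : ℤ => EuclideanSpace ℂ (Fin m)) p (n + j) (d j) with hX
    set Z := lp.single (E := fun _ : ℤ => EuclideanSpace ℂ (Fin m)) p n v +
      ∑ j ∈ Finset.range N,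
        lp.single (E := fun _ : ℤ => EuclideanSpace ℂ (Fin m)) p (n + 1 + j) (e j) with hZ
    have hsmulform : ∀ j : ℕ, 1 ≤ j →
        lam • d j - T₀ (d j) = ((((N:ℂ) - (j:ℂ)) / (N:ℂ)) * ψ ^ (j - 1)) • w := by
      intro j hj
      have hdj : d j = ((((N:ℂ) - (j:ℂ)) / (N:ℂ)) * ψ ^ (j - 1)) • u := by
        simp only [hd]; rw [if_neg (by omega)]
      rw [hdj, map_smul, smul_comm, ← smul_sub, hH1w]
    refine ⟨Z, ⟨X, ?_⟩, ?_⟩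
    · intro k
      have hXk : (X : ℤ → EuclideanSpace ℂ (Fin m)) k =
          if n ≤ k ∧ k < n + (N + 1 : ℕ) then d (k - n).toNat else 0 := by
        rw [hX]; exact aux_sum_single_apply p n d (N + 1) k
      have hXk' : (X : ℤ → EuclideanSpace ℂ (Fin m)) (k - 1) =
          if n ≤ k - 1 ∧ k - 1 < n + (N + 1 : ℕ) then d (k - 1 - n).toNat else 0 := by
        rw [hX]; exact aux_sum_single_apply p n d (N + 1) (k - 1)
      have hZk : (Z : ℤ → EuclideanSpace ℂ (Fin m)) k =
          lp.single (E := fun _ : ℤ => EuclideanSpace ℂ (Fin m)) p n v k +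
            (if n + 1 ≤ k ∧ k < n + 1 + (N : ℕ) then e (k - (n + 1)).toNat else 0) := by
        rw [hZ, lp.coeFn_add, Pi.add_apply, aux_sum_single_apply p (n + 1) e N k]
      rw [hZk, hXk, hXk']
      by_cases h0 : k < n
      · rw [lp.single_apply_ne (E := fun _ : ℤ => EuclideanSpace ℂ (Fin m)) p n v (j := k)
            (by omega),
          if_neg (show ¬(n ≤ k ∧ k < n + ((N + 1 : ℕ) : ℤ)) by omega),
          if_neg (show ¬(n ≤ k - 1 ∧ k - 1 < n + ((N + 1 : ℕ) : ℤ)) by omega),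
          if_neg (show ¬(n + 1 ≤ k ∧ k < n + 1 + ((N : ℕ) : ℤ)) by omega)]
        simp
      · by_cases h1 : k = n
        · rw [if_pos (show n ≤ k ∧ k < n + ((N + 1 : ℕ) : ℤ) by omega),
            if_neg (show ¬(n ≤ k - 1 ∧ k - 1 < n + ((N + 1 : ℕ) : ℤ)) by omega),
            if_neg (show ¬(n + 1 ≤ k ∧ k < n + 1 + ((N : ℕ) : ℤ)) by omega)]
          have hk0 : (k - n).toNat = 0 := by omega
          have hsv : lp.single (E := fun _ : ℤ => EuclideanSpace ℂ (Fin m)) p n v k = v := by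
            rw [h1]; exact lp.single_apply_self (E := fun _ : ℤ => EuclideanSpace ℂ (Fin m)) p n v
          have hd0 : d (k - n).toNat = Rl v := by rw [hk0]; simp [hd]
          rw [hsv, hd0, map_zero, add_zero, add_zero]
          exact (H1 v).symm
        · by_cases h2 : n + 1 ≤ k ∧ k ≤ n + N
          · rw [lp.single_apply_ne (E := fun _ : ℤ => EuclideanSpace ℂ (Fin m)) p n v (j := k) h1,
              if_pos (show n ≤ k ∧ k < n + ((N + 1 : ℕ) : ℤ) by omega),
              if_pos (show n ≤ k - 1 ∧ k - 1 < n + ((N + 1 : ℕ) : ℤ) by omega),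
              if_pos (show n + 1 ≤ k ∧ k < n + 1 + ((N : ℕ) : ℤ) by omega), zero_add]
            have hje : (k - (n + 1)).toNat = (k - n).toNat - 1 := by omega
            have hje' : (k - 1 - n).toNat = (k - n).toNat - 1 := by omega
            rw [hje, hje']
            obtain ⟨j, hjdef⟩ : ∃ j : ℕ, (k - n).toNat = j := ⟨(k - n).toNat, rfl⟩
            rw [hjdef]
            have hj1 : 1 ≤ j := by omega
            have hjN : j ≤ N := by omega
            rw [sub_add_eq_sub_sub, hsmulform j hj1]
            rcases Nat.lt_or_ge j 2 with hj2 | hj2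
            · have hjeq : j = 1 := by omega
              subst hjeq
              have hd0 : d (1 - 1) = Rl v := by simp [hd]
              rw [hd0, ← hw]
              have hrw : ((((N : ℂ) - ((1 : ℕ) : ℂ)) / (N : ℂ)) * ψ ^ (1 - 1)) • w - w =
                  (((((N : ℂ) - ((1 : ℕ) : ℂ)) / (N : ℂ)) * ψ ^ (1 - 1)) - 1) • w := by
                rw [sub_smul, one_smul]
              rw [hrw]
              simp only [he]
              congr 1
              push_cast
              field_simp
              ring
            · obtain ⟨i, rfl⟩ : ∃ i, j = i + 2 := ⟨j - 2, by omega⟩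
              have h21 : i + 2 - 1 = i + 1 := by omega
              rw [h21]
              have hdprev : d (i + 1) =
                  ((((N : ℂ) - ((i + 1 : ℕ) : ℂ)) / (N : ℂ)) * ψ ^ i) • u := by
                simp only [hd]
                rw [if_neg (by omega)]
                norm_num
              rw [hdprev, map_smul, hTu, smul_smul, ← sub_smul]
              simp only [he]
              congr 1
              push_cast
              field_simp
              ring
          · by_cases h3 : k = n + N + 1
            · rw [lp.single_apply_ne (E := fun _ : ℤ => EuclideanSpace ℂ (Fin m)) p n v (j := k)
                  (by omega),
                if_neg (show ¬(n ≤ k ∧ k < n + ((N + 1 : ℕ) : ℤ)) by omega),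
                if_pos (show n ≤ k - 1 ∧ k - 1 < n + ((N + 1 : ℕ) : ℤ) by omega),
                if_neg (show ¬(n + 1 ≤ k ∧ k < n + 1 + ((N : ℕ) : ℤ)) by omega)]
              have hdN : d (k - 1 - n).toNat = 0 := by
                have hN' : (k - 1 - n).toNat = N := by omega
                rw [hN']
                simp only [hd]
                rw [if_neg (by omega)]
                simp
              rw [hdN]
              simp
            · rw [lp.single_apply_ne (E := fun _ : ℤ => EuclideanSpace ℂ (Fin m)) p n v (j := k) h1,
                if_neg (show ¬(n ≤ k ∧ k < n + ((N + 1 : ℕ) : ℤ)) by omega),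
                if_neg (show ¬(n ≤ k - 1 ∧ k - 1 < n + ((N + 1 : ℕ) : ℤ)) by omega),
                if_neg (show ¬(n + 1 ≤ k ∧ k < n + 1 + ((N : ℕ) : ℤ)) by omega)]
              simp
    · rw [dist_eq_norm]
      have hsub : lp.single (E := fun _ : ℤ => EuclideanSpace ℂ (Fin m)) p n v - Z =
          -(∑ j ∈ Finset.range N,
            lp.single (E := fun _ : ℤ => EuclideanSpace ℂ (Fin m)) p (n + 1 + j) (e j)) := by
        rw [hZ]; abel
      rw [hsub, norm_neg]
      by_contra hcon
      push_neg at hcon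
      have hnorm : ‖∑ j ∈ Finset.range N,
          lp.single (E := fun _ : ℤ => EuclideanSpace ℂ (Fin m)) p (n + 1 + j) (e j)‖ ^ pr =
          ∑ j ∈ Finset.range N, ‖e j‖ ^ pr := aux_norm_sum_single hpr0 (n + 1) e N
      have hej : ∀ j : ℕ, ‖e j‖ = (1 / N) * ‖w‖ := by
        intro j
        simp only [he]
        rw [norm_smul, norm_mul, norm_neg, norm_pow, hψabs, one_pow, mul_one]
        congr 1
        rw [norm_div, norm_one, Complex.norm_natCast]
      have hsum : ∑ j ∈ Finset.range N, ‖e j‖ ^ pr = (N:ℝ) * ((1 / N) * ‖w‖) ^ pr := by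
        rw [Finset.sum_congr rfl fun j _ => by rw [hej j]]
        rw [Finset.sum_const, Finset.card_range, nsmul_eq_mul]
      have hle : ε ^ pr ≤ (N:ℝ) * ((1 / N) * ‖w‖) ^ pr := by
        calc ε ^ pr ≤ ‖∑ j ∈ Finset.range N,
            lp.single (E := fun _ : ℤ => EuclideanSpace ℂ (Fin m)) p (n + 1 + j) (e j)‖ ^ pr :=
            Real.rpow_le_rpow hε.le hcon hpr0.le
          _ = _ := by rw [hnorm, hsum]
      linarith
  -- assemble
  rw [dense_iff_closure_eq, Set.eq_univ_iff_forall]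
  intro y
  have hclos : closure S = (Sm.topologicalClosure : Set _) :=
    (Submodule.topologicalClosure_coe Sm).symm
  have h2 : ∀ s : Finset ℤ, (∑ i ∈ s, lp.single p i (y i)) ∈ Sm.topologicalClosure := by
    intro s
    refine sum_mem fun i _ => ?_
    have := hsingle i (y i)
    rw [hclos] at this
    exact this
  have h3 : y ∈ Sm.topologicalClosure :=
    Sm.isClosed_topologicalClosure.mem_of_tendsto (lp.hasSum_single hp2 y)
      (Filter.Eventually.of_forall h2)
  rw [hclos]
  exact h3
end

section
/- Let $A_0, A_1$ be $m \times m$ complex matrices with $A_1 \neq 0$ satisfying $A_1 R(\lambda, A_0) A_1 = \phi(\lambda) A_1$ for $\lambda \notin \sigma(A_0)$, and let $A$ be the operator on $X = \ell^\infty(\mathbb{Z}; \mathbb{C}^m)$ given by $A(x_k) = (A_0 x_k + A_1 x_{k-1})$. If $\lambda \notin \sigma(A_0)$, $|\phi(\lambda)| = 1$, and $y_0 \in \mathbb{C}^m$ satisfies $R_\lambda A_1 R_\lambda y_0 \neq 0$ where $R_\lambda = R(\lambda, A_0)$, then the element $y = (\phi(\lambda)^k y_0)_{k \in \mathbb{Z}}$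 does not lie in the closure of the range of $\lambda - A$. -/
open scoped ENNReal

private lemma toEL_mul (m : ℕ) (M N : Matrix (Fin m) (Fin m) ℂ) (v : EuclideanSpace ℂ (Fin m)) :
    Matrix.toEuclideanLin (M * N) v = Matrix.toEuclideanLin M (Matrix.toEuclideanLin N v) := by
  simp [Matrix.toEuclideanLin_apply, Matrix.mulVec_mulVec]

private lemma toEL_one (m : ℕ) (v : EuclideanSpace ℂ (Fin m)) :
    Matrix.toEuclideanLin (1 : Matrix (Fin m) (Fin m) ℂ) v = v := by
  simp [Matrix.toEuclideanLin_apply]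

set_option maxHeartbeats 1000000 in
/-- on `ℓ^∞(ℤ;ℂ^m)`, for `λ ∉ σ(A₀)`, `|φ(λ)| = 1` and `y₀` with
`R_λ A₁ R_λ y₀ ≠ 0`, the element `y = (φ(λ)^k y₀)_k` is not in the closure of
the range of `λ - A`. -/
theorem stmt_7 (m : ℕ)
    (A₀ A₁ : Matrix (Fin m) (Fin m) ℂ) (hA₁ : A₁ ≠ 0)
    (φ : ℂ → ℂ)
    (hφ : ∀ lam : ℂ, lam ∉ spectrum ℂ A₀ →
      A₁ * (lam • (1 : Matrix (Fin m) (Fin m) ℂ) - A₀)⁻¹ * A₁ = φ lam • A₁)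
    (lam : ℂ) (hlam : lam ∉ spectrum ℂ A₀) (habs : ‖φ lam‖ = 1)
    (y₀ : EuclideanSpace ℂ (Fin m))
    (hy₀ : Matrix.toEuclideanLin
        ((lam • (1 : Matrix (Fin m) (Fin m) ℂ) - A₀)⁻¹ * A₁ *
          (lam • (1 : Matrix (Fin m) (Fin m) ℂ) - A₀)⁻¹) y₀ ≠ 0)
    (y : lp (fun _ : ℤ => EuclideanSpace ℂ (Fin m)) ∞)
    (hy : ∀ k : ℤ, y k = φ lam ^ k • y₀) :
    y ∉ closure {z : lp (fun _ : ℤ => EuclideanSpace ℂ (Fin m)) ∞ |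
      ∃ x : lp (fun _ : ℤ => EuclideanSpace ℂ (Fin m)) ∞,
        ∀ k : ℤ, z k = lam • x k - (Matrix.toEuclideanLin A₀ (x k)
          + Matrix.toEuclideanLin A₁ (x (k - 1)))} := by
  classical
  set Mt : Matrix (Fin m) (Fin m) ℂ := lam • (1 : Matrix (Fin m) (Fin m) ℂ) - A₀ with hMt
  set B : Matrix (Fin m) (Fin m) ℂ := Mt⁻¹ with hB
  -- B is the inverse of Mt
  have hUnit : IsUnit Mt := by
    have := spectrum.notMem_iff.mp hlam
    rwa [Algebra.algebraMap_eq_smul_one] at this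
  have hdet : IsUnit Mt.det := (Matrix.isUnit_iff_isUnit_det Mt).mp hUnit
  have hBM : B * Mt = 1 := Matrix.nonsing_inv_mul Mt hdet
  -- w and operators
  set w : EuclideanSpace ℂ (Fin m) := Matrix.toEuclideanLin (B * A₁ * B) y₀ with hw
  have hwpos : 0 < ‖w‖ := norm_pos_iff.mpr hy₀
  set F : EuclideanSpace ℂ (Fin m) →L[ℂ] EuclideanSpace ℂ (Fin m) :=
    LinearMap.toContinuousLinearMap (Matrix.toEuclideanLin (B * A₁ * B)) with hF
  set G : EuclideanSpace ℂ (Fin m) →L[ℂ] EuclideanSpace ℂ (Fin m) :=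
    LinearMap.toContinuousLinearMap (Matrix.toEuclideanLin (B * A₁)) with hG
  have hφ0 : φ lam ≠ 0 := by
    intro h; rw [h] at habs; simp at habs
  have hFnn : (0:ℝ) ≤ ‖F‖ := norm_nonneg F
  have hFpos : (0:ℝ) < ‖F‖ + 1 := by linarith
  set ε : ℝ := ‖w‖ / (2 * (‖F‖ + 1)) with hε
  have hεpos : 0 < ε := div_pos hwpos (by linarith)
  intro hmem
  obtain ⟨z, hzS, hdist⟩ := Metric.mem_closure_iff.mp hmem ε hεpos
  obtain ⟨x, hx⟩ := hzS
  -- per-coordinate bound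
  have hcoord : ∀ k : ℤ, ‖(y : ∀ _ : ℤ, EuclideanSpace ℂ (Fin m)) k - z k‖ ≤ ε := by
    intro k
    have h1 : ‖(y - z) k‖ ≤ ‖y - z‖ := lp.norm_apply_le_norm ENNReal.top_ne_zero (y - z) k
    have h2 : (y - z) k = (y : ∀ _ : ℤ, EuclideanSpace ℂ (Fin m)) k - z k := by
      simp [lp.coeFn_sub]
    rw [h2] at h1
    exact h1.trans (le_of_lt (by rwa [dist_eq_norm] at hdist))
  set u : ℤ → EuclideanSpace ℂ (Fin m) := fun k => G (x k) with hu
  set v : ℤ → EuclideanSpace ℂ (Fin m) := fun k => (φ lam) ^ (-k) • u k with hv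
  -- F (z k) = u k - φ • u (k-1)
  have hFz : ∀ k : ℤ, F (z k) = u k - φ lam • u (k - 1) := by
    intro k
    rw [hx k]
    have hzk : lam • x k - (Matrix.toEuclideanLin A₀ (x k)
        + Matrix.toEuclideanLin A₁ (x (k - 1)))
        = Matrix.toEuclideanLin Mt (x k) - Matrix.toEuclideanLin A₁ (x (k - 1)) := by
      rw [hMt]
      rw [map_sub (Matrix.toEuclideanLin)]
      rw [map_smul (Matrix.toEuclideanLin)]
      simp only [LinearMap.sub_apply, LinearMap.smul_apply, toEL_one]
      abel
    have e1 : F (Matrix.toEuclideanLin Mt (x k)) = u k := by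
      simp only [hF, LinearMap.coe_toContinuousLinearMap']
      rw [← toEL_mul]
      have : B * A₁ * B * Mt = B * A₁ := by
        rw [mul_assoc (B * A₁) B Mt, hBM, mul_one]
      rw [this]
      rfl
    have e2 : F (Matrix.toEuclideanLin A₁ (x (k - 1))) = φ lam • u (k - 1) := by
      simp only [hF, LinearMap.coe_toContinuousLinearMap']
      rw [← toEL_mul]
      have hABA : A₁ * B * A₁ = φ lam • A₁ := hφ lam hlam
      have hkey : B * A₁ * B * A₁ = φ lam • (B * A₁) := by
        calc B * A₁ * B * A₁ = B * (A₁ * B * A₁) := by simp only [mul_assoc]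
          _ = B * (φ lam • A₁) := by rw [hABA]
          _ = φ lam • (B * A₁) := by rw [Matrix.mul_smul]
      rw [hkey]
      rw [map_smul (Matrix.toEuclideanLin)]
      rfl
    rw [hzk, map_sub, e1, e2]
  -- F (y k) = φ^k • w
  have hFy : ∀ k : ℤ, F ((y : ∀ _ : ℤ, EuclideanSpace ℂ (Fin m)) k) = φ lam ^ k • w := by
    intro k
    rw [hy k, map_smul]
    rfl
  -- step estimate
  have hstep : ∀ k : ℤ, ‖w - (v k - v (k - 1))‖ ≤ ‖w‖ / 2 := by
    intro k
    have hv' : v k - v (k - 1) = (φ lam) ^ (-k) • (u k - φ lam • u (k - 1)) := by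
      simp only [hv]
      rw [smul_sub, smul_smul]
      congr 2
      rw [show -(k - 1) = -k + 1 by ring, zpow_add₀ hφ0, zpow_one]
    have key : (φ lam) ^ (-k) • F ((y : ∀ _ : ℤ, EuclideanSpace ℂ (Fin m)) k - z k)
        = w - (v k - v (k - 1)) := by
      rw [map_sub, smul_sub, hFy k, hFz k, smul_smul, ← zpow_add₀ hφ0, neg_add_cancel,
        zpow_zero, one_smul, hv']
    rw [← key, norm_smul]
    have habs' : ‖(φ lam) ^ (-k)‖ = 1 := by
      rw [norm_zpow, habs, one_zpow]
    rw [habs', one_mul]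
    calc ‖F ((y : ∀ _ : ℤ, EuclideanSpace ℂ (Fin m)) k - z k)‖
        ≤ ‖F‖ * ‖(y : ∀ _ : ℤ, EuclideanSpace ℂ (Fin m)) k - z k‖ := F.le_opNorm _
      _ ≤ ‖F‖ * ε := mul_le_mul_of_nonneg_left (hcoord k) hFnn
      _ ≤ (‖F‖ + 1) * ε := mul_le_mul_of_nonneg_right (by linarith) (le_of_lt hεpos)
      _ = ‖w‖ / 2 := by
          rw [hε, mul_comm (2:ℝ) (‖F‖ + 1), ← mul_div_assoc,
            mul_div_mul_left _ _ (ne_of_gt hFpos)]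
  -- accumulate by induction
  have hacc : ∀ n : ℕ, ‖(n : ℝ) • w - (v n - v 0)‖ ≤ n * (‖w‖ / 2) := by
    intro n
    induction n with
    | zero => simp
    | succ n ih =>
      have h1 := hstep ((n : ℤ) + 1)
      have e : ((n : ℤ) + 1) - 1 = (n : ℤ) := by ring
      rw [e] at h1
      have ec1 : ((n + 1 : ℕ) : ℤ) = (n : ℤ) + 1 := by push_cast; ring
      have ec2 : ((n + 1 : ℕ) : ℝ) = (n : ℝ) + 1 := by push_cast; ring
      have split : ((n : ℝ) + 1) • w - (v ((n : ℤ) + 1) - v 0)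
          = (w - (v ((n : ℤ) + 1) - v n)) + ((n : ℝ) • w - (v n - v 0)) := by
        rw [add_smul, one_smul]; abel
      rw [ec1, ec2, split]
      calc ‖(w - (v ((n : ℤ) + 1) - v n)) + ((n : ℝ) • w - (v n - v 0))‖
          ≤ ‖w - (v ((n : ℤ) + 1) - v n)‖ + ‖(n : ℝ) • w - (v n - v 0)‖ := norm_add_le _ _
        _ ≤ ‖w‖ / 2 + n * (‖w‖ / 2) := add_le_add h1 ih
        _ = ((n : ℝ) + 1) * (‖w‖ / 2) := by ring
  -- bound on v
  set K : ℝ := ‖G‖ * ‖x‖ with hK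
  have hvK : ∀ k : ℤ, ‖v k‖ ≤ K := by
    intro k
    have hnv : ‖v k‖ = ‖u k‖ := by
      simp only [hv]
      rw [norm_smul, norm_zpow, habs, one_zpow, one_mul]
    rw [hnv]
    calc ‖u k‖ ≤ ‖G‖ * ‖x k‖ := G.le_opNorm _
      _ ≤ ‖G‖ * ‖x‖ := mul_le_mul_of_nonneg_left
          (lp.norm_apply_le_norm ENNReal.top_ne_zero x k) (norm_nonneg G)
  -- final contradiction
  obtain ⟨n, hn⟩ := exists_nat_gt ((2 * K) / (‖w‖ / 2))
  have h1 : (n : ℝ) * ‖w‖ ≤ n * (‖w‖ / 2) + 2 * K := by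
    calc (n : ℝ) * ‖w‖ = ‖(n : ℝ) • w‖ := by
          rw [norm_smul, Real.norm_eq_abs, abs_of_nonneg (Nat.cast_nonneg n)]
      _ = ‖((n : ℝ) • w - (v n - v 0)) + (v n - v 0)‖ := by rw [sub_add_cancel]
      _ ≤ ‖(n : ℝ) • w - (v n - v 0)‖ + ‖v n - v 0‖ := norm_add_le _ _
      _ ≤ n * (‖w‖ / 2) + (‖v n‖ + ‖v 0‖) := add_le_add (hacc n) (norm_sub_le _ _)
      _ ≤ n * (‖w‖ / 2) + (K + K) := add_le_add le_rfl (add_le_add (hvK n) (hvK 0))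
      _ = n * (‖w‖ / 2) + 2 * K := by ring
  have h2 : (n : ℝ) * (‖w‖ / 2) ≤ 2 * K := by nlinarith
  have h3 : (2 * K) / (‖w‖ / 2) < n := hn
  have h4 : (n : ℝ) * (‖w‖ / 2) > 2 * K := by
    rw [div_lt_iff₀ (by linarith)] at h3
    linarith
  linarith
end

section
/- Let $p$ and $q$ be coprime complex polynomials with all roots of $q$ in the open left half-plane $\{\operatorname{Re} \lambda < 0\}$, and set $\phi(\lambda) = p(\lambda)/q(\lambda)$. Suppose $|\phi(0)| = 1$, $|\phi(is)| < 1$ for all real $s \neq 0$, and $|\phi(\lambda)| \to 0$ as $|\lambda| \to \infty$. Then there exists an even integer $n \ge 2$ and constants $c, C, \delta > 0$ such that $c |s|^n \le 1 - |\phi(is)| \le C |s|^n$ for all real $s$ with $0 < |s| \le \delta$. -/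
open Polynomial Complex

/-- Lemma 2.4: if `φ = p/q` with `p, q` coprime, all roots of `q`
in the open left half-plane, `|φ(0)| = 1`, `|φ(is)| < 1` for real `s ≠ 0`, and
`|φ(λ)| → 0` as `|λ| → ∞`, then there is an even `n ≥ 2` with
`1 - |φ(is)| ≍ |s|^n` as `s → 0`. -/
theorem stmt_8 (p q : Polynomial ℂ) (hcop : IsCoprime p q)
    (hq : ∀ z : ℂ, q.eval z = 0 → z.re < 0)
    (φ : ℂ → ℂ) (hφ : ∀ z : ℂ, φ z = p.eval z / q.eval z)
    (h0 : ‖φ 0‖ = 1)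
    (hlt : ∀ s : ℝ, s ≠ 0 → ‖φ (Complex.I * s)‖ < 1)
    (hinf : Filter.Tendsto (fun z : ℂ => ‖φ z‖) (Bornology.cobounded ℂ) (nhds 0)) :
    ∃ (n : ℕ) (c C δ : ℝ), Even n ∧ 2 ≤ n ∧ 0 < c ∧ 0 < C ∧ 0 < δ ∧
      ∀ s : ℝ, 0 < |s| → |s| ≤ δ →
        c * |s| ^ n ≤ 1 - ‖φ (Complex.I * s)‖ ∧
        1 - ‖φ (Complex.I * s)‖ ≤ C * |s| ^ n := by
  -- q does not vanish on the imaginary axis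
  have hq0 : ∀ s : ℝ, q.eval (Complex.I * s) ≠ 0 := by
    intro s h
    have h2 := hq _ h
    simp [Complex.mul_re] at h2
  have hq0pos : ∀ s : ℝ, 0 < ‖q.eval (Complex.I * s)‖ := fun s =>
    norm_pos_iff.mpr (hq0 s)
  -- |φ(is)| = |p(is)|/|q(is)|
  have habsφ : ∀ s : ℝ, ‖φ (Complex.I * s)‖ =
      ‖p.eval (Complex.I * s)‖ / ‖q.eval (Complex.I * s)‖ := by
    intro s; rw [hφ, norm_div]
  -- |p(0)| = |q(0)|
  have habs0 : ‖p.eval 0‖ = ‖q.eval 0‖ := by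
    have h1 : ‖φ (Complex.I * (0:ℝ))‖ = 1 := by simpa using h0
    rw [habsφ 0] at h1
    have h3 : ‖q.eval (Complex.I * ((0:ℝ):ℂ))‖ ≠ 0 := ne_of_gt (hq0pos 0)
    rw [div_eq_one_iff_eq h3] at h1
    simpa using h1
  -- |p(is)| < |q(is)| for s ≠ 0
  have hplt : ∀ s : ℝ, s ≠ 0 →
      ‖p.eval (Complex.I * s)‖ < ‖q.eval (Complex.I * s)‖ := by
    intro s hs
    have h1 := hlt s hs
    rw [habsφ s, div_lt_one (hq0pos s)] at h1
    exact h1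
  -- the polynomial A with A(s) = |q(is)|² - |p(is)|² for real s
  set A : ℂ[X] := (q.comp (C Complex.I * X)) * ((q.map (starRingEnd ℂ)).comp (C (-Complex.I) * X))
      - (p.comp (C Complex.I * X)) * ((p.map (starRingEnd ℂ)).comp (C (-Complex.I) * X)) with hAdef
  have hAeval : ∀ s : ℝ, A.eval (s:ℂ) =
      (Complex.normSq (q.eval (Complex.I * s)) : ℂ) - (Complex.normSq (p.eval (Complex.I * s)) : ℂ) := by
    intro s
    have key : ∀ r : ℂ[X], ((r.map (starRingEnd ℂ)).comp (C (-Complex.I) * X)).eval (s:ℂ)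
        = (starRingEnd ℂ) (r.eval (Complex.I * s)) := by
      intro r
      have h1 : (-Complex.I) * (s:ℂ) = (starRingEnd ℂ) (Complex.I * s) := by
        simp [map_mul, Complex.conj_ofReal]
      rw [eval_comp, eval_mul, eval_C, eval_X, h1, eval_map, Polynomial.eval₂_at_apply]
    simp only [hAdef, eval_sub, eval_mul, eval_comp, eval_C, eval_X, key]
    rw [Complex.mul_conj, Complex.mul_conj]
  have hA0 : A.eval 0 = 0 := by
    have h1 := hAeval 0
    have h2 : Complex.normSq (q.eval (Complex.I * (0:ℝ))) = Complex.normSq (p.eval (Complex.I * (0:ℝ))) := by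
      rw [← Complex.sq_norm, ← Complex.sq_norm]
      simp [habs0]
    rw [h2] at h1
    simpa using h1
  have hAne : A ≠ 0 := by
    intro h
    have h1 := hAeval 1
    rw [h] at h1
    simp only [eval_zero] at h1
    have h2 := hplt 1 one_ne_zero
    have h3 : Complex.normSq (p.eval (Complex.I * (1:ℝ))) < Complex.normSq (q.eval (Complex.I * (1:ℝ))) := by
      rw [← Complex.sq_norm, ← Complex.sq_norm]
      exact pow_lt_pow_left₀ h2 (norm_nonneg _) two_ne_zero
    have h4 := congrArg Complex.re h1
    simp at h4 h3
    linarith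
  -- factor out the root at 0
  set n := A.rootMultiplicity 0 with hndef
  set B := A /ₘ (X - C 0) ^ n with hBdef
  have hfact : ∀ s : ℝ, A.eval (s:ℂ) = (s:ℂ) ^ n * B.eval (s:ℂ) := by
    intro s
    have h := Polynomial.pow_mul_divByMonic_rootMultiplicity_eq A 0
    conv_lhs => rw [← h]
    rw [eval_mul, eval_pow, eval_sub, eval_X, eval_C, sub_zero, ← hndef, ← hBdef]
  have hB0 : B.eval 0 ≠ 0 := Polynomial.eval_divByMonic_pow_rootMultiplicity_ne_zero 0 hAne
  have hn1 : 1 ≤ n := by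
    have := (Polynomial.rootMultiplicity_pos hAne).mpr hA0
    omega
  have contB : Continuous (fun s : ℝ => B.eval (s:ℂ)) :=
    (Polynomial.continuous B).comp Complex.continuous_ofReal
  -- B has real values on ℝ
  have himB : ∀ s : ℝ, (B.eval (s:ℂ)).im = 0 := by
    have h1 : Set.EqOn (fun s : ℝ => (B.eval (s:ℂ)).im) (fun _ => (0:ℝ)) {(0:ℝ)}ᶜ := by
      intro s hs
      have hs0 : s ≠ 0 := hs
      have h2 := hAeval s
      rw [hfact s] at h2
      have h5 : s ^ n * (B.eval (s:ℂ)).im = 0 := by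
        have h3 := congrArg Complex.im h2
        simp only [← Complex.ofReal_pow, Complex.mul_im, Complex.ofReal_im, Complex.ofReal_re,
          Complex.sub_im, zero_mul, add_zero, mul_zero, sub_zero, sub_self] at h3
        linarith [h3]
      have h6 : s ^ n ≠ 0 := pow_ne_zero _ hs0
      simpa [h6] using mul_eq_zero.mp h5 |>.resolve_left h6
    have h2 := Continuous.ext_on (dense_compl_singleton (0:ℝ))
      (Complex.continuous_im.comp contB) continuous_const h1
    intro s
    exact congrFun h2 s
  set g : ℝ → ℝ := fun s => (B.eval (s:ℂ)).re with hgdef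
  have contg : Continuous g := Complex.continuous_re.comp contB
  have hBg : ∀ s : ℝ, B.eval (s:ℂ) = (g s : ℂ) := by
    intro s
    exact Complex.ext (by simp [hgdef]) (by simp [himB s])
  have hg0ne : g 0 ≠ 0 := by
    intro h
    apply hB0
    have h2 := hBg 0
    rw [h] at h2
    simpa using h2
  -- the real function r
  set r : ℝ → ℝ := fun s => Complex.normSq (q.eval (Complex.I * s)) - Complex.normSq (p.eval (Complex.I * s)) with hrdef
  have hr : ∀ s : ℝ, r s = s ^ n * g s := by
    intro s
    have h1 := hAeval s
    rw [hfact s, hBg s] at h1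
    have h2 : ((r s : ℝ) : ℂ) = ((s ^ n * g s : ℝ) : ℂ) := by
      simp only [hrdef]
      push_cast
      exact h1.symm
    exact_mod_cast h2
  have hrpos : ∀ s : ℝ, s ≠ 0 → 0 < r s := by
    intro s hs
    have h1 := hplt s hs
    have h2 : Complex.normSq (p.eval (Complex.I * s)) < Complex.normSq (q.eval (Complex.I * s)) := by
      rw [← Complex.sq_norm, ← Complex.sq_norm]
      exact pow_lt_pow_left₀ h1 (norm_nonneg _) two_ne_zero
    simp only [hrdef]
    linarith
  have hsg : ∀ s : ℝ, s ≠ 0 → 0 < s ^ n * g s := by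
    intro s hs
    rw [← hr s]; exact hrpos s hs
  -- g 0 > 0
  have hg0pos : 0 < g 0 := by
    rcases lt_or_gt_of_ne hg0ne with h | h
    · exfalso
      have hopen : IsOpen {s : ℝ | g s < 0} := isOpen_lt contg continuous_const
      have hmem : {s : ℝ | g s < 0} ∈ nhds (0:ℝ) := hopen.mem_nhds h
      obtain ⟨ε, hε, hball⟩ := Metric.mem_nhds_iff.mp hmem
      have hmemb : (ε/2) ∈ Metric.ball (0:ℝ) ε := by
        simp only [Metric.mem_ball, Real.dist_eq, sub_zero]
        rw [abs_of_pos (by linarith)]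
        linarith
      have h1 : g (ε/2) < 0 := hball hmemb
      have h2 := hsg (ε/2) (by positivity)
      have h3 : (0:ℝ) < (ε/2) ^ n := pow_pos (by linarith) n
      nlinarith
    · exact h
  -- n is even
  have heven : Even n := by
    by_contra hodd
    rw [Nat.not_even_iff_odd] at hodd
    have hopen : IsOpen {s : ℝ | 0 < g s} := isOpen_lt continuous_const contg
    have hmem : {s : ℝ | 0 < g s} ∈ nhds (0:ℝ) := hopen.mem_nhds hg0pos
    obtain ⟨ε, hε, hball⟩ := Metric.mem_nhds_iff.mp hmem
    have hmemb : (-(ε/2)) ∈ Metric.ball (0:ℝ) ε := by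
      simp only [Metric.mem_ball, Real.dist_eq, sub_zero]
      rw [abs_neg, abs_of_pos (by linarith)]
      linarith
    have h1 : 0 < g (-(ε/2)) := hball hmemb
    have h2 := hsg (-(ε/2)) (by simp; positivity)
    have h3 : (-(ε/2)) ^ n < 0 := hodd.pow_neg (by linarith)
    nlinarith
  have hn2 : 2 ≤ n := by
    obtain ⟨k, hk⟩ := heven
    omega
  -- the denominator function
  set D : ℝ → ℝ := fun s => ‖q.eval (Complex.I * s)‖ *
      (‖q.eval (Complex.I * s)‖ + ‖p.eval (Complex.I * s)‖) with hDdef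
  have hDpos : ∀ s : ℝ, 0 < D s := by
    intro s
    have h1 := hq0pos s
    have h2 := norm_nonneg (p.eval (Complex.I * s))
    simp only [hDdef]
    positivity
  have contD : Continuous D := by
    have h1 : Continuous (fun s : ℝ => ‖q.eval (Complex.I * s)‖) :=
      continuous_norm.comp ((Polynomial.continuous q).comp
        (continuous_const.mul Complex.continuous_ofReal))
    have h2 : Continuous (fun s : ℝ => ‖p.eval (Complex.I * s)‖) :=
      continuous_norm.comp ((Polynomial.continuous p).comp
        (continuous_const.mul Complex.continuous_ofReal))
    exact h1.mul (h1.add h2)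
  -- key identity
  have hkey : ∀ s : ℝ, 1 - ‖φ (Complex.I * s)‖ = r s / D s := by
    intro s
    rw [eq_div_iff (ne_of_gt (hDpos s)), habsφ s]
    have haq := hq0pos s
    simp only [hDdef, hrdef]
    rw [← Complex.sq_norm, ← Complex.sq_norm]
    field_simp
    ring
  -- choose δ
  obtain ⟨δ₁, hδ₁, hg₁⟩ := Metric.continuousAt_iff.mp contg.continuousAt (g 0 / 2) (by linarith)
  obtain ⟨δ₂, hδ₂, hD₁⟩ := Metric.continuousAt_iff.mp contD.continuousAt (D 0 / 2) (by linarith [hDpos 0])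
  have hminpos : 0 < min δ₁ δ₂ := lt_min hδ₁ hδ₂
  set δ := min δ₁ δ₂ / 2 with hδdef
  have hδpos : 0 < δ := by positivity
  have hD0 := hDpos 0
  refine ⟨n, g 0 / (3 * D 0), 3 * g 0 / D 0, δ, heven, hn2,
    by positivity, by positivity, hδpos, ?_⟩
  intro s hs hsδ
  have hsδ₁ : dist s 0 < δ₁ := by
    rw [Real.dist_eq, sub_zero]
    have h := min_le_left δ₁ δ₂
    rw [hδdef] at hsδ
    linarith
  have hsδ₂ : dist s 0 < δ₂ := by
    rw [Real.dist_eq, sub_zero]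
    have h := min_le_right δ₁ δ₂
    rw [hδdef] at hsδ
    linarith
  have hgs := hg₁ hsδ₁
  have hDs := hD₁ hsδ₂
  rw [Real.dist_eq] at hgs hDs
  obtain ⟨hgs1, hgs2⟩ := abs_lt.mp hgs
  obtain ⟨hDs1, hDs2⟩ := abs_lt.mp hDs
  have hgl : g 0 / 2 ≤ g s := by linarith
  have hgu : g s ≤ 3 * g 0 / 2 := by linarith
  have hDl : D 0 / 2 ≤ D s := by linarith
  have hDu : D s ≤ 3 * D 0 / 2 := by linarith
  have hDspos := hDpos s
  rw [hkey s, hr s]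
  have hsn : s ^ n = |s| ^ n := (heven.pow_abs s).symm
  have ht : (0:ℝ) ≤ |s| ^ n := by positivity
  set t := |s| ^ n with htdef
  constructor
  · rw [le_div_iff₀ hDspos, hsn]
    have h1 : g 0 * t * D s ≤ g 0 * t * (3 * D 0 / 2) :=
      mul_le_mul_of_nonneg_left hDu (mul_nonneg hg0pos.le ht)
    have h2 : (3 * D 0 * t) * (g 0 / 2) ≤ (3 * D 0 * t) * g s :=
      mul_le_mul_of_nonneg_left hgl (mul_nonneg (by linarith) ht)
    rw [div_mul_eq_mul_div, div_mul_eq_mul_div, div_le_iff₀ (by linarith : (0:ℝ) < 3 * D 0)]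
    nlinarith [h1, h2]
  · rw [div_le_iff₀ hDspos, hsn]
    have h1 : t * D 0 * g s ≤ t * D 0 * (3 * g 0 / 2) :=
      mul_le_mul_of_nonneg_left hgu (mul_nonneg ht hD0.le)
    have h2 : (3 * g 0 * t) * (D 0 / 2) ≤ (3 * g 0 * t) * D s :=
      mul_le_mul_of_nonneg_left hDl (mul_nonneg (by linarith) ht)
    rw [div_mul_eq_mul_div, div_mul_eq_mul_div, le_div_iff₀ hD0]
    ring_nf at h1 h2 ⊢
    linarith [h1, h2]
end

section
/- Let $\zeta > 0$ and $k \ge 1$ an integer, and define $\phi(\lambda) = \zeta^k / (\lambda + \zeta)^k$ for $\lambda \neq -\zeta$. Then $\sup_{0 < \lambda \le 1} \lambda / (1 - |\phi(\lambda)|) < \infty$. -/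
/-- for `φ(λ) = ζ^k/(λ+ζ)^k`, the quantity `λ/(1-|φ(λ)|)` is
bounded on `(0,1]`. -/
theorem stmt_10 (ζ : ℝ) (hζ : 0 < ζ) (k : ℕ) (hk : 1 ≤ k) :
    ∃ M : ℝ, ∀ lam : ℝ, 0 < lam → lam ≤ 1 →
      lam / (1 - |ζ ^ k / (lam + ζ) ^ k|) ≤ M := by
  refine ⟨1 + ζ, fun lam hl hl1 => ?_⟩
  have hs : 0 < lam + ζ := by linarith
  set r : ℝ := ζ / (lam + ζ) with hr
  have hr0 : 0 < r := div_pos hζ hs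
  have hr1 : r < 1 := (div_lt_one hs).2 (by linarith)
  have habs : |ζ ^ k / (lam + ζ) ^ k| = r ^ k := by
    rw [abs_of_pos (div_pos (pow_pos hζ k) (pow_pos hs k)), hr, div_pow]
  have hpow : r ^ k ≤ r := pow_le_of_le_one hr0.le hr1.le (Nat.one_le_iff_ne_zero.mp hk)
  have h1r : 1 - r = lam / (lam + ζ) := by
    rw [hr]; field_simp; ring
  have hpos : 0 < 1 - |ζ ^ k / (lam + ζ) ^ k| := by
    rw [habs]; nlinarith
  rw [div_le_iff₀ hpos]
  have : lam ≤ (1 + ζ) * (1 - r) := by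
    rw [h1r, mul_div_assoc', le_div_iff₀ hs]
    nlinarith
  calc lam ≤ (1 + ζ) * (1 - r) := this
    _ ≤ (1 + ζ) * (1 - |ζ ^ k / (lam + ζ) ^ k|) := by
        rw [habs]; nlinarith
end

section
/- Let $\zeta > 0$ and $k \ge 1$ an integer, and define $\phi(\lambda) = \zeta^k / (\lambda + \zeta)^k$ for $\lambda > 0$. Then for every integer $n \ge 1$ and every $\lambda > 0$, $\frac{\lambda^{n+1}}{n!} \sum_{\ell = 1}^{\infty} \left| \frac{d^n}{d\lambda^n} \phi(\lambda)^{\ell} \right| \le \zeta$. -/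
open Finset

lemma iter_deriv_const_mul' (c : ℝ) (f : ℝ → ℝ) :
    ∀ n : ℕ, deriv^[n] (fun y => c * f y) = fun y => c * deriv^[n] f y
  | 0 => rfl
  | n+1 => by
    rw [Function.iterate_succ_apply', iter_deriv_const_mul' c f n,
      deriv_const_mul_field', Function.iterate_succ_apply']

lemma cast_ascFactorial_prod (m : ℕ) :
    ∀ n : ℕ, ((m.ascFactorial n : ℝ)) = ∏ i ∈ range n, ((m : ℝ) + i)
  | 0 => by simp
  | n+1 => by
    rw [Nat.ascFactorial_succ, prod_range_succ, ← cast_ascFactorial_prod m n]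
    push_cast; ring

/-- for `φ(λ) = ζ^k/(λ+ζ)^k`, one has
`(λ^{n+1}/n!) ∑_{ℓ≥1} |d^n/dλ^n φ(λ)^ℓ| ≤ ζ` for all `n ≥ 1`, `λ > 0`.
The sum over `ℓ ≥ 1` is written with `ℓ = j + 1`, `j : ℕ`. -/
theorem stmt_11 (ζ : ℝ) (hζ : 0 < ζ) (k : ℕ) (hk : 1 ≤ k)
    (n : ℕ) (hn : 1 ≤ n) (lam : ℝ) (hlam : 0 < lam) :
    lam ^ (n + 1) / (n.factorial : ℝ) *
      ∑' j : ℕ, |iteratedDeriv n (fun x : ℝ => (ζ ^ k / (x + ζ) ^ k) ^ (j + 1)) lam| ≤ ζ := by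
  have ha : 0 < lam + ζ := by linarith
  set r : ℝ := ζ / (lam + ζ) with hr_def
  have hr0 : 0 < r := div_pos hζ ha
  have hr1 : r < 1 := (div_lt_one ha).2 (by linarith)
  set d : ℕ → ℝ := fun i =>
    (n.factorial : ℝ) * ((i + n).choose n) * (ζ ^ (i+1) * (lam + ζ) ^ (-(i+1+n : ℕ) : ℤ)) with hd_def
  -- term computation
  have hterm : ∀ j : ℕ, |iteratedDeriv n (fun x : ℝ => (ζ ^ k / (x + ζ) ^ k) ^ (j + 1)) lam|
      = d (k * (j + 1) - 1) := by
    intro j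
    set m : ℕ := k * (j + 1) with hm_def
    have hm1 : 1 ≤ m := Nat.one_le_iff_ne_zero.2 (by positivity)
    have hfun : (fun x : ℝ => (ζ ^ k / (x + ζ) ^ k) ^ (j + 1))
        = fun x : ℝ => ζ ^ m * (x + ζ) ^ (-(m : ℤ)) := by
      funext x
      rw [div_pow, ← pow_mul, ← pow_mul, zpow_neg, zpow_natCast, div_eq_mul_inv]
    rw [hfun]
    have hcomp : (fun x : ℝ => ζ ^ m * (x + ζ) ^ (-(m : ℤ)))
        = fun x : ℝ => (fun y : ℝ => ζ ^ m * y ^ (-(m : ℤ))) (x + ζ) := rfl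
    have h3 : iteratedDeriv n (fun x : ℝ => ζ ^ m * (x + ζ) ^ (-(m : ℤ))) lam
        = iteratedDeriv n (fun y : ℝ => ζ ^ m * y ^ (-(m : ℤ))) (lam + ζ) :=
      congrFun (iteratedDeriv_comp_add_const n (fun y : ℝ => ζ ^ m * y ^ (-(m : ℤ))) ζ) lam
    rw [h3, iteratedDeriv_eq_iterate, iter_deriv_const_mul']
    simp only [iter_deriv_zpow]
    have habs : |ζ ^ m * ((∏ i ∈ range n, (-(m:ℝ) - i)) * (lam + ζ) ^ (-(m:ℤ) - n))|
        = ζ ^ m * ((∏ i ∈ range n, ((m : ℝ) + i)) * (lam + ζ) ^ (-(m:ℤ) - n)) := by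
      rw [abs_mul, abs_mul, abs_prod, abs_of_pos (pow_pos hζ m),
        abs_of_pos (zpow_pos ha _)]
      congr 1
      congr 1
      refine prod_congr rfl fun i _ => ?_
      push_cast
      have h1 : (0:ℝ) ≤ (m:ℝ) := Nat.cast_nonneg m
      have h2 : (0:ℝ) ≤ (i:ℝ) := Nat.cast_nonneg i
      rw [abs_of_nonpos (by linarith : -(m:ℝ) - i ≤ 0)]
      ring
    simp only [Int.cast_neg, Int.cast_natCast]
    rw [habs, hd_def]
    simp only
    have hi1 : m - 1 + 1 = m := Nat.succ_pred_eq_of_pos hm1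
    rw [← cast_ascFactorial_prod]
    have hasc : m.ascFactorial n = n.factorial * ((m - 1) + n).choose n := by
      have h := Nat.ascFactorial_eq_factorial_mul_choose (m - 1) n
      rwa [hi1] at h
    rw [hasc]
    have hznn : (-(m:ℤ) - n) = (-(m + n : ℕ) : ℤ) := by push_cast; ring
    have hznn2 : (-(m - 1 + 1 + n : ℕ) : ℤ) = (-(m + n : ℕ) : ℤ) := by omega
    rw [hznn, hznn2, hi1]
    push_cast
    ring
  -- closed form for the full sum
  have hdsum : HasSum d ((n.factorial : ℝ) * ζ / lam ^ (n + 1)) := by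
    have h1 : HasSum (fun i : ℕ => ((i + n).choose n : ℝ) * r ^ i) (1 / (1 - r) ^ (n + 1)) :=
      hasSum_choose_mul_geometric_of_norm_lt_one n
        (by rw [Real.norm_eq_abs, abs_of_pos hr0]; exact hr1)
    have h2 := h1.mul_left ((n.factorial : ℝ) * ζ * (lam + ζ) ^ (-(1 + n : ℕ) : ℤ))
    have hde : d = fun i : ℕ => ((n.factorial : ℝ) * ζ * (lam + ζ) ^ (-(1 + n : ℕ) : ℤ)) *
        (((i + n).choose n : ℝ) * r ^ i) := by
      funext i
      rw [hd_def]
      simp only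
      rw [hr_def, zpow_neg, zpow_natCast, zpow_neg, zpow_natCast, div_pow]
      field_simp
      ring
    rw [hde]
    convert h2 using 1
    · rfl
    rw [zpow_neg, zpow_natCast]
    have h1r : 1 - r = lam / (lam + ζ) := by rw [hr_def]; field_simp; ring
    rw [h1r, div_pow]
    field_simp
    ring
  -- comparison
  have hdnonneg : ∀ i, 0 ≤ d i := by
    intro i
    rw [hd_def]
    have : (0:ℝ) < (lam + ζ) ^ (-(i+1+n : ℕ) : ℤ) := zpow_pos ha _
    positivity
  have hinj : Function.Injective (fun j : ℕ => k * (j + 1) - 1) := by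
    intro a b hab
    simp only at hab
    have ha1 : 1 ≤ k * (a + 1) := Nat.one_le_iff_ne_zero.2 (by positivity)
    have hb1 : 1 ≤ k * (b + 1) := Nat.one_le_iff_ne_zero.2 (by positivity)
    have h1 : k * (a + 1) = k * (b + 1) := by omega
    have := Nat.eq_of_mul_eq_mul_left (by omega : 0 < k) h1
    omega
  have hsumle : ∑' j : ℕ, d (k * (j + 1) - 1) ≤ ∑' i : ℕ, d i := by
    refine Summable.tsum_le_tsum_of_inj (fun j : ℕ => k * (j + 1) - 1) hinj
      (fun c _ => hdnonneg c) (fun j => le_rfl)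
      (hdsum.summable.comp_injective hinj) hdsum.summable
  calc lam ^ (n + 1) / (n.factorial : ℝ) *
      ∑' j : ℕ, |iteratedDeriv n (fun x : ℝ => (ζ ^ k / (x + ζ) ^ k) ^ (j + 1)) lam|
      = lam ^ (n + 1) / (n.factorial : ℝ) * ∑' j : ℕ, d (k * (j + 1) - 1) := by
        rw [tsum_congr hterm]
    _ ≤ lam ^ (n + 1) / (n.factorial : ℝ) * ∑' i : ℕ, d i := by
        apply mul_le_mul_of_nonneg_left hsumle (by positivity)
    _ = lam ^ (n + 1) / (n.factorial : ℝ) * ((n.factorial : ℝ) * ζ / lam ^ (n + 1)) := by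
        rw [hdsum.tsum_eq]
    _ = ζ := by
        field_simp
end

section
/- For $t \ge 0$ define the sequence $y(t) \in \ell^1(\mathbb{Z}_{\ge 0})$ by $y_k(t) = \frac{t^k}{k!} - \frac{t^{k+1}}{(k+1)!}$. Then there exists a constant $C > 0$ such that $e^{-t}\big(1 + \|y(t)\|_{\ell^1}\big) \le C t^{-1/2}$ for all $t \ge 2$. -/
open Real


-- Stirling lower bound: n! ≥ √(2n) (n/e)^n for n ≥ 1
lemma aux_stirling (n : ℕ) (hn : 1 ≤ n) :
    Real.sqrt (2 * n) * ((n : ℝ) / Real.exp 1) ^ n ≤ (n.factorial : ℝ) := by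
  have h1 : Real.sqrt π ≤ Stirling.stirlingSeq n := by
    obtain ⟨m, rfl⟩ := Nat.exists_eq_add_of_le hn
    have := Stirling.stirlingSeq'_antitone
    have h2 : Filter.Tendsto (Stirling.stirlingSeq ∘ Nat.succ) Filter.atTop (nhds (Real.sqrt π)) := by
      exact Stirling.tendsto_stirlingSeq_sqrt_pi.comp (Filter.tendsto_add_atTop_nat 1)
    have := this.le_of_tendsto h2 m
    simpa [Nat.succ_eq_add_one, add_comm] using this
  have hpi : (1:ℝ) ≤ Real.sqrt π := by
    rw [show (1:ℝ) = Real.sqrt 1 by simp]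
    exact Real.sqrt_le_sqrt (by linarith [Real.pi_gt_three])
  have h3 : (1:ℝ) ≤ Stirling.stirlingSeq n := le_trans hpi h1
  rw [Stirling.stirlingSeq] at h3
  have hpos : 0 < Real.sqrt (2 * n) * ((n : ℝ) / Real.exp 1) ^ n := by
    have : (0:ℝ) < n := by exact_mod_cast hn
    positivity
  rw [le_div_iff₀ hpos] at h3
  linarith


lemma aux_tsum (t : ℝ) (ht : 2 ≤ t) :
    1 + ∑' k : ℕ, |t ^ k / (k.factorial : ℝ) - t ^ (k + 1) / ((k + 1).factorial : ℝ)|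
      = 2 * t ^ (⌊t⌋₊) / ((⌊t⌋₊).factorial : ℝ) := by
  set a : ℕ → ℝ := fun k => t ^ k / (k.factorial : ℝ) with ha
  have ht0 : (0:ℝ) ≤ t := by linarith
  have hapos : ∀ k, 0 < t → 0 < a k := fun k h => by
    simp only [ha]; positivity
  have hanonneg : ∀ k, 0 ≤ a k := fun k => by simp only [ha]; positivity
  have hsa : Summable a := Real.summable_pow_div_factorial t
  have hrec : ∀ k : ℕ, a (k + 1) = a k * (t / (k + 1)) := by
    intro k
    simp only [ha, Nat.factorial_succ, pow_succ, Nat.cast_mul]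
    field_simp
    push_cast
    ring
  set n := ⌊t⌋₊ with hn
  have hnt : (n : ℝ) ≤ t := Nat.floor_le ht0
  have htn : t < n + 1 := Nat.lt_floor_add_one t
  -- summability of f
  have hsf : Summable (fun k => |a k - a (k + 1)|) := by
    apply Summable.of_nonneg_of_le (fun k => abs_nonneg _)
      (fun k => (abs_sub _ _).trans (by rw [abs_of_nonneg (hanonneg k), abs_of_nonneg (hanonneg (k+1))]))
    exact hsa.add ((summable_nat_add_iff 1).2 hsa)
  -- first part: for i < n, a i ≤ a (i+1)
  have hmono : ∀ i < n, a i ≤ a (i + 1) := by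
    intro i hi
    rw [hrec i]
    have h1 : (1:ℝ) ≤ t / (i + 1) := by
      rw [le_div_iff₀ (by positivity)]
      have : (i:ℝ) + 1 ≤ n := by exact_mod_cast hi
      linarith
    nlinarith [hanonneg i]
  have hfirst : ∑ i ∈ Finset.range n, |a i - a (i + 1)| = a n - a 0 := by
    rw [← Finset.sum_range_sub a n]
    apply Finset.sum_congr rfl
    intro i hi
    rw [abs_sub_comm, abs_of_nonneg (sub_nonneg.2 (hmono i (Finset.mem_range.1 hi)))]
  -- second part: for i ≥ n, a (i+1) ≤ a i
  have hanti : ∀ i, a (n + i + 1) ≤ a (n + i) := by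
    intro i
    rw [hrec]
    have h1 : t / ((n + i : ℕ) + 1 : ℝ) ≤ 1 := by
      rw [div_le_one (by positivity)]
      push_cast
      have : (n:ℝ) ≤ n + i := by simp
      linarith
    nlinarith [hanonneg (n + i)]
  have htail : HasSum (fun i => |a (i + n) - a (i + n + 1)|) (a n) := by
    have hnn : ∀ i : ℕ, 0 ≤ a (i + n) - a (i + n + 1) := by
      intro i
      have := hanti i
      rw [add_comm n i] at this
      linarith
    have heq : (fun i => |a (i + n) - a (i + n + 1)|) = fun i => a (i + n) - a (i + n + 1) := by
      funext i; exact abs_of_nonneg (hnn i)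
    rw [heq, hasSum_iff_tendsto_nat_of_nonneg hnn]
    have hps : ∀ m : ℕ, ∑ i ∈ Finset.range m, (a (i + n) - a (i + n + 1)) = a n - a (m + n) := by
      intro m
      have := Finset.sum_range_sub' (fun i => a (i + n)) m
      simpa [Nat.add_right_comm] using this
    simp only [hps]
    have h0 : Filter.Tendsto (fun m : ℕ => a (m + n)) Filter.atTop (nhds 0) := by
      have := FloorSemiring.tendsto_pow_div_factorial_atTop t
      exact (this.comp (Filter.tendsto_add_atTop_nat n))
    have := Filter.Tendsto.const_sub (a n) h0
    simpa using this
  have hfull : HasSum (fun k => |a k - a (k + 1)|)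
      ((∑ i ∈ Finset.range n, |a i - a (i + 1)|) + a n) :=
    HasSum.sum_range_add (f := fun k => |a k - a (k + 1)|) (k := n) htail
  rw [hfull.tsum_eq, hfirst]
  have ha0 : a 0 = 1 := by simp [ha]
  rw [ha0]
  simp only [ha]
  ring

lemma aux_bound (t : ℝ) (ht : 2 ≤ t) :
    Real.exp (-t) * (2 * t ^ (⌊t⌋₊) / ((⌊t⌋₊).factorial : ℝ)) ≤ 2 * t ^ (-(1 / 2) : ℝ) := by
  set n := ⌊t⌋₊ with hn
  have ht0 : (0:ℝ) < t := by linarith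
  have hn2 : 2 ≤ n := Nat.le_floor (by exact_mod_cast ht)
  have hnpos : (0:ℝ) < n := by exact_mod_cast (by omega : 0 < n)
  have hnt : (n : ℝ) ≤ t := Nat.floor_le ht0.le
  have htn : t < n + 1 := Nat.lt_floor_add_one t
  -- key: exp (-t) * t^n ≤ exp (-n) * n^n
  have hkey : Real.exp (-t) * t ^ n ≤ Real.exp (-(n:ℝ)) * (n:ℝ) ^ n := by
    have h1 : (t / n) ^ n ≤ Real.exp (t - n) := by
      have hlog : Real.log (t / n) ≤ t / n - 1 := Real.log_le_sub_one_of_pos (by positivity)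
      have h2 : (t / n) ^ n = Real.exp ((n : ℝ) * Real.log (t / n)) := by
        rw [← Real.log_pow, Real.exp_log (by positivity)]
      rw [h2]
      apply Real.exp_le_exp.2
      have : (n : ℝ) * (t / n - 1) = t - n := by field_simp
      nlinarith [hlog]
    have h3 : t ^ n ≤ Real.exp (t - n) * (n:ℝ) ^ n := by
      have := mul_le_mul_of_nonneg_right h1 (by positivity : (0:ℝ) ≤ (n:ℝ) ^ n)
      rwa [div_pow, div_mul_cancel₀] at this
      positivity
    calc Real.exp (-t) * t ^ n ≤ Real.exp (-t) * (Real.exp (t - n) * (n:ℝ) ^ n) := by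
          exact mul_le_mul_of_nonneg_left h3 (Real.exp_pos _).le
      _ = Real.exp (-(n:ℝ)) * (n:ℝ) ^ n := by
          rw [← mul_assoc, ← Real.exp_add]; ring_nf
  have hfac := aux_stirling n (by omega)
  have hden : (0:ℝ) < Real.sqrt (2 * n) * ((n : ℝ) / Real.exp 1) ^ n := by positivity
  have hfacpos : (0:ℝ) < (n.factorial : ℝ) := by exact_mod_cast n.factorial_pos
  have step1 : Real.exp (-t) * (2 * t ^ n / (n.factorial : ℝ))
      ≤ 2 * (Real.exp (-(n:ℝ)) * (n:ℝ) ^ n) / (Real.sqrt (2 * n) * ((n : ℝ) / Real.exp 1) ^ n) := by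
    have l1 : Real.exp (-t) * (2 * t ^ n / (n.factorial : ℝ))
        = 2 * (Real.exp (-t) * t ^ n) / (n.factorial : ℝ) := by ring
    rw [l1]
    apply div_le_div₀ (by positivity) (by nlinarith) hden hfac
  have step2 : 2 * (Real.exp (-(n:ℝ)) * (n:ℝ) ^ n) / (Real.sqrt (2 * n) * ((n : ℝ) / Real.exp 1) ^ n)
      = 2 / Real.sqrt (2 * n) := by
    rw [div_pow, Real.exp_neg, ← Real.exp_one_pow]
    field_simp
  have step3 : 2 / Real.sqrt (2 * n) ≤ 2 * t ^ (-(1 / 2) : ℝ) := by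
    rw [Real.rpow_neg ht0.le, ← Real.sqrt_eq_rpow]
    rw [show (2:ℝ) * (√t)⁻¹ = 2 / √t by ring]
    apply div_le_div_of_nonneg_left (by norm_num) (Real.sqrt_pos.2 ht0) (Real.sqrt_le_sqrt ?_)
    push_cast
    nlinarith
  calc Real.exp (-t) * (2 * t ^ n / (n.factorial : ℝ))
      ≤ 2 * (Real.exp (-(n:ℝ)) * (n:ℝ) ^ n) / (Real.sqrt (2 * n) * ((n : ℝ) / Real.exp 1) ^ n) := step1
    _ = 2 / Real.sqrt (2 * n) := step2
    _ ≤ 2 * t ^ (-(1 / 2) : ℝ) := step3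

/-- with `y_k(t) = t^k/k! - t^{k+1}/(k+1)!`, there is `C > 0` with
`e^{-t}(1 + ∑_k |y_k(t)|) ≤ C t^{-1/2}` for all `t ≥ 2`. -/
theorem stmt_17 :
    ∃ C : ℝ, 0 < C ∧ ∀ t : ℝ, 2 ≤ t →
      Real.exp (-t) *
        (1 + ∑' k : ℕ, |t ^ k / (k.factorial : ℝ) - t ^ (k + 1) / ((k + 1).factorial : ℝ)|)
        ≤ C * t ^ (-(1 / 2) : ℝ) := by
  refine ⟨2, by norm_num, fun t ht => ?_⟩
  rw [aux_tsum t ht]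
  exact aux_bound t ht
end

section
/- Let $\Omega \subseteq \{\lambda \in \mathbb{C} : \operatorname{Re}\lambda \le -1\}$ be nonempty, let $(\alpha_k)_{k \in \mathbb{Z}}$ be a sequence in $\Omega$, and let $A$ act on $X = \ell^p(\mathbb{Z}; \mathbb{C})$, $1 \le p \le \infty$, by $A(x_k) = (x_{k-1} + \alpha_k x_k)$. Then for every $\lambda \in \mathbb{C}$ with $\operatorname{dist}(\lambda, \Omega) > 1$, the operator $\lambda - A$ is invertible and $\|(\lambda - A)^{-1}\| \le \big(\operatorname{dist}(\lambda, \Omega) - 1\big)^{-1}$. -/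
open scoped ENNReal


namespace Stmt18Aux

variable (p : ℝ≥0∞) [Fact (1 ≤ p)]

private lemma p_cases : p = ∞ ∨ 0 < p.toReal := by
  rcases p.trichotomy with h | h | h
  · exfalso
    have h1 : (1 : ℝ≥0∞) ≤ p := Fact.out
    rw [h] at h1
    simp at h1
  · exact Or.inl h
  · exact Or.inr h

lemma memℓp_mul {β : ℤ → ℂ} {C : ℝ} (hC : 0 ≤ C) (hβ : ∀ k, ‖β k‖ ≤ C)
    (x : lp (fun _ : ℤ => ℂ) p) : Memℓp (fun k => β k * x k) p := by
  rcases p_cases p with rfl | hp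
  · apply memℓp_infty
    refine ⟨C * ‖x‖, ?_⟩
    rintro a ⟨k, rfl⟩
    calc ‖β k * x k‖ = ‖β k‖ * ‖x k‖ := norm_mul _ _
      _ ≤ C * ‖x‖ := mul_le_mul (hβ k)
          (lp.norm_apply_le_norm ENNReal.top_ne_zero x k) (norm_nonneg _) hC
  · apply memℓp_gen
    have hs := ((lp.memℓp x).summable hp).mul_left (C ^ p.toReal)
    refine hs.of_nonneg_of_le (fun k => by positivity) (fun k => ?_)
    calc ‖β k * x k‖ ^ p.toReal = (‖β k‖ * ‖x k‖) ^ p.toReal := by rw [norm_mul]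
      _ ≤ (C * ‖x k‖) ^ p.toReal := by
          apply Real.rpow_le_rpow (by positivity) ?_ hp.le
          gcongr
          exact hβ k
      _ = C ^ p.toReal * ‖x k‖ ^ p.toReal := Real.mul_rpow hC (norm_nonneg _)

lemma norm_le_of_pointwise {C : ℝ} (hC : 0 ≤ C) (f x : lp (fun _ : ℤ => ℂ) p)
    (h : ∀ k, ‖f k‖ ≤ C * ‖x k‖) : ‖f‖ ≤ C * ‖x‖ := by
  rcases p_cases p with rfl | hp
  · refine lp.norm_le_of_forall_le (mul_nonneg hC (norm_nonneg x)) fun k => (h k).trans ?_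
    have := lp.norm_apply_le_norm ENNReal.top_ne_zero x k
    exact mul_le_mul_of_nonneg_left this hC
  · refine lp.norm_le_of_forall_sum_le hp (mul_nonneg hC (norm_nonneg x)) fun s => ?_
    calc ∑ i ∈ s, ‖f i‖ ^ p.toReal
        ≤ ∑ i ∈ s, (C * ‖x i‖) ^ p.toReal :=
          Finset.sum_le_sum fun i _ => Real.rpow_le_rpow (norm_nonneg _) (h i) hp.le
      _ = ∑ i ∈ s, C ^ p.toReal * ‖x i‖ ^ p.toReal :=
          Finset.sum_congr rfl fun i _ => Real.mul_rpow hC (norm_nonneg _)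
      _ = C ^ p.toReal * ∑ i ∈ s, ‖x i‖ ^ p.toReal := by rw [Finset.mul_sum]
      _ ≤ C ^ p.toReal * ‖x‖ ^ p.toReal := by
          have h2 := lp.sum_rpow_le_norm_rpow hp x s
          have h3 : (0:ℝ) ≤ C ^ p.toReal := Real.rpow_nonneg hC _
          exact mul_le_mul_of_nonneg_left h2 h3
      _ = (C * ‖x‖) ^ p.toReal := (Real.mul_rpow hC (norm_nonneg _)).symm

lemma memℓp_shift (x : lp (fun _ : ℤ => ℂ) p) : Memℓp (fun k => x (k - 1)) p := by
  rcases p_cases p with rfl | hp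
  · have hb : ∀ k : ℤ, ‖x (k - 1)‖ ≤ ‖x‖ := fun k =>
      lp.norm_apply_le_norm ENNReal.top_ne_zero x (k - 1)
    apply memℓp_infty
    refine ⟨‖x‖, ?_⟩
    rintro a ⟨k, rfl⟩
    exact hb k
  · apply memℓp_gen
    have h1 := (lp.memℓp x).summable hp
    have h2 : Summable ((fun k : ℤ => ‖x k‖ ^ p.toReal) ∘ (Equiv.subRight (1:ℤ))) :=
      ((Equiv.subRight (1:ℤ)).summable_iff).2 h1
    exact h2

lemma norm_shift_le (f x : lp (fun _ : ℤ => ℂ) p)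
    (h : ∀ k, f k = x (k - 1)) : ‖f‖ ≤ ‖x‖ := by
  rcases p_cases p with rfl | hp
  · refine lp.norm_le_of_forall_le (norm_nonneg x) fun k => ?_
    rw [h k]
    exact lp.norm_apply_le_norm ENNReal.top_ne_zero x (k - 1)
  · refine lp.norm_le_of_forall_sum_le hp (norm_nonneg x) fun s => ?_
    have hinj : ∀ a ∈ s, ∀ b ∈ s, a - 1 = b - 1 → a = b := fun a _ b _ hab => by omega
    calc ∑ i ∈ s, ‖f i‖ ^ p.toReal
        = ∑ i ∈ s, ‖x (i - 1)‖ ^ p.toReal := Finset.sum_congr rfl fun i _ => by rw [h i]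
      _ = ∑ j ∈ s.image (· - 1), ‖x j‖ ^ p.toReal := (Finset.sum_image (f := fun j => ‖x j‖ ^ p.toReal) (g := (· - 1)) hinj).symm
      _ ≤ ‖x‖ ^ p.toReal := lp.sum_rpow_le_norm_rpow hp x _

noncomputable def mulOp (β : ℤ → ℂ) (C : ℝ) (hC : 0 ≤ C) (hβ : ∀ k, ‖β k‖ ≤ C) :
    lp (fun _ : ℤ => ℂ) p →L[ℂ] lp (fun _ : ℤ => ℂ) p :=
  LinearMap.mkContinuous
    { toFun := fun x => ⟨fun k => β k * x k, memℓp_mul p hC hβ x⟩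
      map_add' := fun x y => by
        apply lp.ext
        funext k
        show β k * (x + y) k = β k * x k + β k * y k
        rw [lp.coeFn_add]
        simp [mul_add]
      map_smul' := fun c x => by
        apply lp.ext
        funext k
        show β k * (c • x) k = c • (β k * x k)
        rw [lp.coeFn_smul]
        simp only [Pi.smul_apply, smul_eq_mul]
        ring }
    C fun x => by
      refine norm_le_of_pointwise p hC _ x fun k => ?_
      show ‖β k * x k‖ ≤ C * ‖x k‖
      rw [norm_mul]
      exact mul_le_mul_of_nonneg_right (hβ k) (norm_nonneg _)

@[simp] lemma mulOp_apply (β : ℤ → ℂ) (C : ℝ) (hC : 0 ≤ C) (hβ : ∀ k, ‖β k‖ ≤ C)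
    (x : lp (fun _ : ℤ => ℂ) p) (k : ℤ) : mulOp p β C hC hβ x k = β k * x k := rfl

lemma norm_mulOp_le (β : ℤ → ℂ) (C : ℝ) (hC : 0 ≤ C) (hβ : ∀ k, ‖β k‖ ≤ C) :
    ‖mulOp p β C hC hβ‖ ≤ C :=
  LinearMap.mkContinuous_norm_le _ hC _

noncomputable def shiftOp : lp (fun _ : ℤ => ℂ) p →L[ℂ] lp (fun _ : ℤ => ℂ) p :=
  LinearMap.mkContinuous
    { toFun := fun x => ⟨fun k => x (k - 1), memℓp_shift p x⟩
      map_add' := fun x y => by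
        apply lp.ext
        funext k
        show (x + y) (k - 1) = x (k - 1) + y (k - 1)
        rw [lp.coeFn_add]
        simp
      map_smul' := fun c x => by
        apply lp.ext
        funext k
        show (c • x) (k - 1) = c • x (k - 1)
        rw [lp.coeFn_smul]
        simp }
    1 fun x => by
      rw [one_mul]
      exact norm_shift_le p _ x fun k => rfl

@[simp] lemma shiftOp_apply (x : lp (fun _ : ℤ => ℂ) p) (k : ℤ) :
    shiftOp p x k = x (k - 1) := rfl

lemma norm_shiftOp_le : ‖shiftOp p‖ ≤ 1 :=
  LinearMap.mkContinuous_norm_le _ zero_le_one _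

end Stmt18Aux

open Stmt18Aux

/-- for the modified robot rendezvous operator
`A(x_k) = (x_{k-1} + α_k x_k)` on `ℓ^p(ℤ;ℂ)` with `α_k ∈ Ω ⊆ {Re ≤ -1}`, every
`λ` with `dist(λ,Ω) > 1` is in the resolvent set, with
`‖(λ - A)⁻¹‖ ≤ (dist(λ,Ω) - 1)⁻¹`. -/
theorem stmt_18 (Ω : Set ℂ) (hΩne : Ω.Nonempty)
    (hΩ : Ω ⊆ {z : ℂ | z.re ≤ -1})
    (α : ℤ → ℂ) (hα : ∀ k : ℤ, α k ∈ Ω)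
    (p : ℝ≥0∞) [Fact (1 ≤ p)]
    (lam : ℂ) (hlam : 1 < Metric.infDist lam Ω) :
    ∃ R : lp (fun _ : ℤ => ℂ) p →L[ℂ] lp (fun _ : ℤ => ℂ) p,
      ‖R‖ ≤ (Metric.infDist lam Ω - 1)⁻¹ ∧
      (∀ x : lp (fun _ : ℤ => ℂ) p, ∀ k : ℤ,
        lam * R x k - (R x (k - 1) + α k * R x k) = x k) ∧
      (∀ x y : lp (fun _ : ℤ => ℂ) p,
        (∀ k : ℤ, y k = lam * x k - (x (k - 1) + α k * x k)) → R y = x) := by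
  set d := Metric.infDist lam Ω with hddef
  have hd0 : 0 < d := lt_trans one_pos hlam
  have hdk : ∀ k, d ≤ ‖lam - α k‖ := fun k => by
    have h := Metric.infDist_le_dist_of_mem (x := lam) (hα k)
    rwa [dist_eq_norm] at h
  have hne : ∀ k, lam - α k ≠ 0 := fun k => by
    intro h
    have h2 := hdk k
    rw [h, norm_zero] at h2
    linarith
  have hinv0 : (0:ℝ) ≤ d⁻¹ := inv_nonneg.2 hd0.le
  have hinv1 : d⁻¹ < 1 := by
    rw [inv_lt_one_iff₀]
    right; exact hlam
  set β : ℤ → ℂ := fun k => (lam - α k)⁻¹ with hβdef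
  have hβ : ∀ k, ‖β k‖ ≤ d⁻¹ := fun k => by
    rw [hβdef, norm_inv]
    exact inv_anti₀ hd0 (hdk k)
  set D := mulOp p β d⁻¹ hinv0 hβ with hD
  set S := shiftOp p with hS
  set T := D.comp S with hT
  have hTd : ‖T‖ ≤ d⁻¹ := by
    calc ‖T‖ ≤ ‖D‖ * ‖S‖ := ContinuousLinearMap.opNorm_comp_le _ _
      _ ≤ d⁻¹ * 1 := mul_le_mul (norm_mulOp_le p β d⁻¹ hinv0 hβ)
          (norm_shiftOp_le p) (norm_nonneg _) hinv0
      _ = d⁻¹ := mul_one _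
  have hTn : ‖T‖ < 1 := lt_of_le_of_lt hTd hinv1
  set N := ∑' n : ℕ, T ^ n with hN
  have hml : (1 - T) * N = 1 := mul_neg_geom_series T hTn
  have hmr : N * (1 - T) = 1 := geom_series_mul_neg T hTn
  have hβk : ∀ k, (lam - α k) * β k = 1 := fun k => mul_inv_cancel₀ (hne k)
  refine ⟨N.comp D, ?_, ?_, ?_⟩
  · -- norm bound
    have hone : ‖(1 : lp (fun _ : ℤ => ℂ) p →L[ℂ] lp (fun _ : ℤ => ℂ) p)‖ ≤ 1 :=
      ContinuousLinearMap.norm_id_le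
    have h1 := tsum_geometric_le_of_norm_lt_one T hTn
    have h2 : (1 - ‖T‖)⁻¹ ≤ (1 - d⁻¹)⁻¹ :=
      inv_anti₀ (by linarith) (by linarith)
    have hNle : ‖N‖ ≤ (1 - d⁻¹)⁻¹ := by rw [hN]; linarith
    calc ‖N.comp D‖ ≤ ‖N‖ * ‖D‖ := ContinuousLinearMap.opNorm_comp_le _ _
      _ ≤ (1 - d⁻¹)⁻¹ * d⁻¹ := mul_le_mul hNle (norm_mulOp_le p β d⁻¹ hinv0 hβ)
          (norm_nonneg _) (inv_nonneg.2 (by linarith))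
      _ = (d - 1)⁻¹ := by
          rw [← mul_inv]
          congr 1
          field_simp
  · -- left inverse pointwise
    intro x k
    have h1 : (1 - T) (N (D x)) = D x := by
      calc (1 - T) (N (D x)) = ((1 - T) * N) (D x) := rfl
        _ = D x := by rw [hml]; rfl
    have h2 : ((1 - T) (N (D x)) : lp (fun _ : ℤ => ℂ) p) k = (D x) k := by rw [h1]
    rw [ContinuousLinearMap.sub_apply, ContinuousLinearMap.one_apply, lp.coeFn_sub,
      Pi.sub_apply] at h2
    have h3 : (T (N (D x))) k = β k * (N (D x)) (k - 1) := by
      rw [hT]; rfl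
    have h4 : (D x) k = β k * x k := rfl
    rw [h3, h4] at h2
    have h5 : (N.comp D) x = N (D x) := rfl
    rw [h5]
    linear_combination (lam - α k) * h2 + ((N (D x)) (k - 1) + x k) * hβk k
  · -- right inverse
    intro x y hy
    have hDy : D y = (1 - T) x := by
      apply lp.ext
      funext k
      have hL : (D y) k = β k * y k := rfl
      have hR : ((1 - T) x : lp (fun _ : ℤ => ℂ) p) k = x k - β k * x (k - 1) := by
        rw [ContinuousLinearMap.sub_apply, ContinuousLinearMap.one_apply, lp.coeFn_sub,
          Pi.sub_apply]
        congr 1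
      rw [hL, hR]
      linear_combination β k * hy k + x k * hβk k
    calc (N.comp D) y = N (D y) := rfl
      _ = N ((1 - T) x) := by rw [hDy]
      _ = (N * (1 - T)) x := rfl
      _ = x := by rw [hmr]; rfl
end
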